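/- arXiv:2207.08965 — 2 statements merged into one kernel-verified Lean document; each statement's English description precedes it below -/
import Mathlib

section
/- (Root Independence Lemma) Let P be a flow-based polytope with edge set E, let f be a vertex of P, and let r, s ∈ [n] be two roots. Then P_{f,r}(x) = P_{f,s}(x) for every x ∈ P. -/
open Finset

open scoped Classical

/-- The set `E₀` of non-loop directed edges on vertex set `Fin n`. -/
def E0 (n : ℕ) : Finset (Fin n × Fin n) :=
  Finset.univ.filter (fun e => e.1 ≠ e.2)

/-- The reverse of a directed edge. -/
def rev {n : ℕ} (e : Fin n × Fin n) : Fin n × Fin n := (e.2, e.1)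

/-- The underlying undirected (simple) graph of a set of directed edges. -/
def undirGraph (n : ℕ) (D : Finset (Fin n × Fin n)) : SimpleGraph (Fin n) where
  Adj u v := u ≠ v ∧ ((u, v) ∈ D ∨ (v, u) ∈ D)
  symm := ⟨fun u v h => ⟨h.1.symm, h.2.symm⟩⟩
  loopless := ⟨fun u h => h.1 rfl⟩

/-- There is a directed walk from `i` to `j` using only edges in `D`. -/
def reachesIn (n : ℕ) (D : Finset (Fin n × Fin n)) (i j : Fin n) : Prop :=
  Relation.ReflTransGen (fun a b => (a, b) ∈ D) i j

/-- `T` is a directed tree: `n-1` non-loop directed edges whose underlying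
undirected edges form a spanning tree of `Fin n`. -/
def IsDirTree (n : ℕ) (T : Finset (Fin n × Fin n)) : Prop :=
  T ⊆ E0 n ∧ T.card = n - 1 ∧ (undirGraph n T).Connected

/-- `A` is an arborescence rooted at `r`: a directed tree such that from every
vertex there is a directed walk to `r` using only edges of `A`. -/
def IsArb (n : ℕ) (r : Fin n) (A : Finset (Fin n × Fin n)) : Prop :=
  IsDirTree n A ∧ ∀ v : Fin n, reachesIn n A v r

/-- `Flip_f` of a single edge: reverse the edge iff `f e = 1`. -/
noncomputable def flipEdge (n : ℕ) (f : Fin n × Fin n → ℝ) (e : Fin n × Fin n) :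
    Fin n × Fin n :=
  if f e = 1 then rev e else e

/-- `Flip_f` of a set of edges. -/
noncomputable def flipSet (n : ℕ) (f : Fin n × Fin n → ℝ)
    (T : Finset (Fin n × Fin n)) : Finset (Fin n × Fin n) :=
  T.image (flipEdge n f)

/-- Membership in the flow-based polytope with variable edge set `E` and
demands `d` (points are extended by zero outside `E`). -/
def memFlowPolytope (n : ℕ) (E : Finset (Fin n × Fin n)) (d : Fin n → ℤ)
    (x : Fin n × Fin n → ℝ) : Prop :=
  (∀ e, e ∉ E → x e = 0) ∧ (∀ e ∈ E, x e ∈ Set.Icc (0 : ℝ) 1) ∧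
    ∀ v : Fin n, (∑ i, x (v, i)) - (∑ i, x (i, v)) = (d v : ℝ)

/-- A vertex of the flow-based polytope: a 0/1 point of the polytope. -/
def IsVertex (n : ℕ) (E : Finset (Fin n × Fin n)) (d : Fin n → ℤ)
    (f : Fin n × Fin n → ℝ) : Prop :=
  memFlowPolytope n E d f ∧ ∀ e ∈ E, f e = 0 ∨ f e = 1

/-- The 0/1 indicator of a set of edges. -/
def ind (n : ℕ) (S : Finset (Fin n × Fin n)) : Fin n × Fin n → ℝ :=
  fun e => if e ∈ S then 1 else 0

/-- The vertices of the flow-based polytope, encoded by their supports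
(sets of edges carrying flow `1`). -/
noncomputable def flowVertices (n : ℕ) (E : Finset (Fin n × Fin n)) (d : Fin n → ℤ) :
    Finset (Finset (Fin n × Fin n)) :=
  Finset.univ.filter (fun S => S ⊆ E ∧ memFlowPolytope n E d (ind n S))

/-- The polynomial `P_{f,r}(x)` of the Bernoulli factory. Since `f` is 0/1,
`x_e^{f_e}(1-x_e)^{1-f_e}` is `x_e` if `f_e = 1` and `1 - x_e` otherwise, and
`x_e^{1-f_e}(1-x_e)^{f_e}` is `1 - x_e` if `f_e = 1` and `x_e` otherwise. -/
noncomputable def Pfr (n : ℕ) (E : Finset (Fin n × Fin n))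
    (f : Fin n × Fin n → ℝ) (r : Fin n) (x : Fin n × Fin n → ℝ) : ℝ :=
  (∏ e ∈ E, if f e = 1 then x e else 1 - x e) *
    ∑ T ∈ Finset.univ.filter
        (fun T : Finset (Fin n × Fin n) =>
          IsDirTree n T ∧ T ⊆ E ∧ IsArb n r (flipSet n f T)),
      ∏ e ∈ T, (if f e = 1 then 1 - x e else x e)

/-- Membership in the circulation hyperplane `Circ̄`. -/
def memCircBar (n : ℕ) (y : Fin n × Fin n → ℝ) : Prop :=
  ∀ v : Fin n,
    (∑ i ∈ Finset.univ.filter (fun i => i ≠ v), y (v, i)) -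
      (∑ i ∈ Finset.univ.filter (fun i => i ≠ v), y (i, v)) = 0

/-- The arborescence-generating polynomial `SArb_r(y)`. -/
noncomputable def SArb (n : ℕ) (r : Fin n) (y : Fin n × Fin n → ℝ) : ℝ :=
  ∑ A ∈ Finset.univ.filter (fun A : Finset (Fin n × Fin n) => IsArb n r A),
    ∏ e ∈ A, y e

/-- The map `M_f`: `M_f(x)_e = x_e (1 - f_e) + (1 - x_ē) f_ē`. -/
def Mf (n : ℕ) (f x : Fin n × Fin n → ℝ) : Fin n × Fin n → ℝ :=
  fun e => x e * (1 - f e) + (1 - x (rev e)) * f (rev e)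


/-! ### Auxiliary development for the Root Independence Lemma -/

section RootIndAux

variable {n : ℕ}

lemma mem_E0' {e : Fin n × Fin n} : e ∈ E0 n ↔ e.1 ≠ e.2 := by
  simp [E0]

lemma rev_rev' (e : Fin n × Fin n) : rev (rev e) = e := rfl

lemma rev_inj' : Function.Injective (rev : Fin n × Fin n → Fin n × Fin n) := by
  intro a b h
  have h1 := congrArg Prod.fst h
  have h2 := congrArg Prod.snd h
  simp only [rev] at h1 h2
  exact Prod.ext h2 h1

lemma rev_mem_E0' {e : Fin n × Fin n} (h : e ∈ E0 n) : rev e ∈ E0 n := by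
  rw [mem_E0'] at h ⊢
  exact fun hc => h hc.symm

lemma filter_ne_univ (v : Fin n) :
    (Finset.univ.filter (fun i => i ≠ v) : Finset (Fin n)) = Finset.univ.erase v :=
  Finset.filter_ne' _ _

/-- Functional characterization of arborescences. -/
def FunArb (n : ℕ) (r : Fin n) (A : Finset (Fin n × Fin n)) : Prop :=
  A ⊆ E0 n ∧ (∀ u : Fin n, u ≠ r → ∃! w, (u, w) ∈ A) ∧ (∀ w, (r, w) ∉ A) ∧
    ∀ u, reachesIn n A u r

lemma reach_reachable {D : Finset (Fin n × Fin n)} (hD : D ⊆ E0 n) {a b : Fin n}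
    (h : reachesIn n D a b) : (undirGraph n D).Reachable a b := by
  induction h with
  | refl => rfl
  | tail hab h ih =>
      exact ih.trans (SimpleGraph.Adj.reachable ⟨mem_E0'.mp (hD h), Or.inl h⟩)

lemma isArb_iff (hn : 0 < n) (r : Fin n) (A : Finset (Fin n × Fin n)) :
    IsArb n r A ↔ FunArb n r A := by
  constructor
  · rintro ⟨⟨hsub, hcard, -⟩, hreach⟩
    have hfib : A.card = ∑ u : Fin n, (A.filter (fun e => e.1 = u)).card :=
      Finset.card_eq_sum_card_fiberwise (fun e _ => Finset.mem_univ e.1)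
    have hone : ∀ u : Fin n, u ≠ r → 1 ≤ (A.filter (fun e => e.1 = u)).card := by
      intro u hu
      rcases (hreach u).cases_head with h | ⟨c, hc, -⟩
      · exact absurd h hu
      · exact Finset.card_pos.mpr ⟨(u, c), Finset.mem_filter.mpr ⟨hc, rfl⟩⟩
    have hsplit : (∑ u : Fin n, (A.filter (fun e => e.1 = u)).card)
        = (A.filter (fun e => e.1 = r)).card
          + ∑ u ∈ Finset.univ.erase r, (A.filter (fun e => e.1 = u)).card :=
      (Finset.add_sum_erase _ _ (Finset.mem_univ r)).symm
    have hcard_erase : (Finset.univ.erase r : Finset (Fin n)).card = n - 1 := by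
      rw [Finset.card_erase_of_mem (Finset.mem_univ r), Finset.card_univ, Fintype.card_fin]
    have hlow : (n - 1 : ℕ) ≤ ∑ u ∈ Finset.univ.erase r, (A.filter (fun e => e.1 = u)).card := by
      calc (n - 1 : ℕ) = ∑ _u ∈ Finset.univ.erase r, 1 := by
            rw [Finset.sum_const, smul_eq_mul, mul_one, hcard_erase]
        _ ≤ _ := Finset.sum_le_sum (fun u hu => hone u (Finset.ne_of_mem_erase hu))
    have hzero : (A.filter (fun e => e.1 = r)).card = 0 := by omega
    have hsum_erase : (∑ u ∈ Finset.univ.erase r, (A.filter (fun e => e.1 = u)).card) = n - 1 := by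
      omega
    have hall : ∀ u ∈ Finset.univ.erase r, (1 : ℕ) = (A.filter (fun e => e.1 = u)).card := by
      rw [← Finset.sum_eq_sum_iff_of_le (fun u hu => hone u (Finset.ne_of_mem_erase hu))]
      rw [hsum_erase, Finset.sum_const, smul_eq_mul, mul_one, hcard_erase]
    refine ⟨hsub, ?_, ?_, hreach⟩
    · intro u hu
      obtain ⟨e₀, he₀⟩ := Finset.card_eq_one.mp
        (hall u (Finset.mem_erase.mpr ⟨hu, Finset.mem_univ u⟩)).symm
      have he₀m : e₀ ∈ A.filter (fun e => e.1 = u) := he₀ ▸ Finset.mem_singleton_self e₀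
      obtain ⟨he₀A, he₀1⟩ := Finset.mem_filter.mp he₀m
      refine ⟨e₀.2, ?_, ?_⟩
      · show (u, e₀.2) ∈ A
        rwa [show (u, e₀.2) = e₀ from Prod.ext he₀1.symm rfl]
      · intro w hw
        have : (u, w) ∈ A.filter (fun e => e.1 = u) := Finset.mem_filter.mpr ⟨hw, rfl⟩
        rw [he₀] at this
        have := Finset.mem_singleton.mp this
        exact congrArg Prod.snd this
    · intro w hw
      have : (r, w) ∈ A.filter (fun e => e.1 = r) := Finset.mem_filter.mpr ⟨hw, rfl⟩
      rw [Finset.card_eq_zero.mp hzero] at this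
      exact absurd this (Finset.notMem_empty _)
  · rintro ⟨hsub, huniq, hroot, hreach⟩
    have hcard : A.card = n - 1 := by
      have hfib : A.card = ∑ u : Fin n, (A.filter (fun e => e.1 = u)).card :=
        Finset.card_eq_sum_card_fiberwise (fun e _ => Finset.mem_univ e.1)
      have hone : ∀ u : Fin n, u ≠ r → (A.filter (fun e => e.1 = u)).card = 1 := by
        intro u hu
        obtain ⟨w, hw, hwu⟩ := huniq u hu
        rw [Finset.card_eq_one]
        refine ⟨(u, w), ?_⟩
        ext e
        simp only [Finset.mem_filter, Finset.mem_singleton]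
        constructor
        · rintro ⟨heA, he1⟩
          have : e = (u, e.2) := Prod.ext he1 rfl
          rw [this] at heA ⊢
          rw [hwu e.2 heA]
        · rintro rfl
          exact ⟨hw, rfl⟩
      have hzero : (A.filter (fun e => e.1 = r)).card = 0 := by
        rw [Finset.card_eq_zero, Finset.filter_eq_empty_iff]
        intro e heA he1
        exact hroot e.2 (by rwa [show (r, e.2) = e from Prod.ext he1.symm rfl] )
      rw [hfib, ← Finset.add_sum_erase _ _ (Finset.mem_univ r), hzero, zero_add]
      rw [Finset.sum_congr rfl (fun u hu => hone u (Finset.ne_of_mem_erase hu))]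
      rw [Finset.sum_const, smul_eq_mul, mul_one,
        Finset.card_erase_of_mem (Finset.mem_univ r), Finset.card_univ, Fintype.card_fin]
    refine ⟨⟨hsub, hcard, ?_⟩, hreach⟩
    rw [SimpleGraph.connected_iff]
    have : Nonempty (Fin n) := ⟨⟨0, hn⟩⟩
    refine ⟨fun a b => ?_, this⟩
    exact (reach_reachable hsub (hreach a)).trans (reach_reachable hsub (hreach b)).symm


/-! #### Encoding arborescences by functions -/

noncomputable def gof (A : Finset (Fin n × Fin n)) : Fin n → Fin n :=
  fun u => if h : ∃ w, (u, w) ∈ A then h.choose else u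

lemma gof_eq {r : Fin n} {A : Finset (Fin n × Fin n)} (hA : FunArb n r A)
    {u w : Fin n} (h : (u, w) ∈ A) : gof A u = w := by
  have hex : ∃ w, (u, w) ∈ A := ⟨w, h⟩
  have hu : u ≠ r := by
    rintro rfl; exact hA.2.2.1 w h
  obtain ⟨w', hw', huniq⟩ := hA.2.1 u hu
  rw [gof, dif_pos hex]
  rw [huniq _ hex.choose_spec, huniq _ h]

lemma gof_root {r : Fin n} {A : Finset (Fin n × Fin n)} (hA : FunArb n r A) :
    gof A r = r := by
  rw [gof, dif_neg]
  rintro ⟨w, hw⟩; exact hA.2.2.1 w hw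

lemma gof_mem {r : Fin n} {A : Finset (Fin n × Fin n)} (hA : FunArb n r A)
    {u : Fin n} (hu : u ≠ r) : (u, gof A u) ∈ A := by
  obtain ⟨w, hw, -⟩ := hA.2.1 u hu
  rw [gof_eq hA hw]; exact hw

lemma iter_reach {A : Finset (Fin n × Fin n)} {r : Fin n} {g : Fin n → Fin n}
    (hg : ∀ u, u ≠ r → (u, g u) ∈ A) :
    ∀ (k : ℕ) (u : Fin n), g^[k] u = r → reachesIn n A u r := by
  intro k
  induction k with
  | zero => intro u h; exact h ▸ Relation.ReflTransGen.refl
  | succ k ih =>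
      intro u h
      by_cases hu : u = r
      · exact hu ▸ Relation.ReflTransGen.refl
      · exact Relation.ReflTransGen.head (hg u hu)
          (ih (g u) (by rwa [Function.iterate_succ_apply] at h))

lemma reach_iter {r : Fin n} {A : Finset (Fin n × Fin n)} (hA : FunArb n r A) :
    ∀ u, reachesIn n A u r → ∃ k, (gof A)^[k] u = r := by
  intro u hu
  induction hu using Relation.ReflTransGen.head_induction_on with
  | refl => exact ⟨0, rfl⟩
  | head h _ ih =>
      obtain ⟨k, hk⟩ := ih
      refine ⟨k + 1, ?_⟩
      rw [Function.iterate_succ_apply, gof_eq hA h]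
      exact hk

noncomputable def Gv (n : ℕ) (v : Fin n) : Finset (Fin n → Fin n) :=
  Finset.univ.filter
    (fun g => g v = v ∧ (∀ u, u ≠ v → g u ≠ u) ∧ ∀ u, ∃ k, g^[k] u = v)

noncomputable def Aof (n : ℕ) (v : Fin n) (g : Fin n → Fin n) : Finset (Fin n × Fin n) :=
  (Finset.univ.erase v).image (fun u => (u, g u))

lemma mem_Aof {v : Fin n} {g : Fin n → Fin n} {e : Fin n × Fin n} :
    e ∈ Aof n v g ↔ e.1 ≠ v ∧ e.2 = g e.1 := by
  constructor
  · intro h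
    obtain ⟨u, hu, hue⟩ := Finset.mem_image.mp h
    obtain rfl := hue.symm
    exact ⟨Finset.ne_of_mem_erase hu, rfl⟩
  · rintro ⟨h1, h2⟩
    refine Finset.mem_image.mpr ⟨e.1, Finset.mem_erase.mpr ⟨h1, Finset.mem_univ _⟩, ?_⟩
    exact Prod.ext rfl h2.symm

lemma funArb_Aof {v : Fin n} {g : Fin n → Fin n} (hg : g ∈ Gv n v) :
    FunArb n v (Aof n v g) := by
  obtain ⟨-, hgv, hgne, hgreach⟩ :
      g ∈ Finset.univ ∧ g v = v ∧ (∀ u, u ≠ v → g u ≠ u) ∧ ∀ u, ∃ k, g^[k] u = v := by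
    simpa [Gv] using hg
  refine ⟨?_, ?_, ?_, ?_⟩
  · intro e he
    obtain ⟨h1, h2⟩ := mem_Aof.mp he
    rw [mem_E0']
    rw [h2]
    exact fun hc => hgne e.1 h1 hc.symm
  · intro u hu
    refine ⟨g u, mem_Aof.mpr ⟨hu, rfl⟩, fun w hw => ?_⟩
    exact (mem_Aof.mp hw).2
  · intro w hw
    exact (mem_Aof.mp hw).1 rfl
  · intro u
    obtain ⟨k, hk⟩ := hgreach u
    exact iter_reach (fun u hu => mem_Aof.mpr ⟨hu, rfl⟩) k u hk

lemma gof_Aof {v : Fin n} {g : Fin n → Fin n} (hg : g ∈ Gv n v) :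
    gof (Aof n v g) = g := by
  obtain ⟨-, hgv, -, -⟩ :
      g ∈ Finset.univ ∧ g v = v ∧ (∀ u, u ≠ v → g u ≠ u) ∧ ∀ u, ∃ k, g^[k] u = v := by
    simpa [Gv] using hg
  funext u
  by_cases hu : u = v
  · subst hu
    rw [gof_root (funArb_Aof hg), hgv]
  · exact gof_eq (funArb_Aof hg) (mem_Aof.mpr ⟨hu, rfl⟩)

lemma Aof_gof {v : Fin n} {A : Finset (Fin n × Fin n)} (hA : FunArb n v A) :
    Aof n v (gof A) = A := by
  ext e
  rw [mem_Aof]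
  constructor
  · rintro ⟨h1, h2⟩
    have := gof_mem hA h1
    rwa [show e = (e.1, gof A e.1) from Prod.ext rfl h2]
  · intro he
    have h1 : e.1 ≠ v := by
      rintro h
      exact hA.2.2.1 e.2 (by rwa [show (v, e.2) = e from Prod.ext h.symm rfl])
    have h2 : gof A e.1 = e.2 := gof_eq hA (by rwa [show (e.1, e.2) = e from rfl])
    exact ⟨h1, h2.symm⟩

lemma gof_mem_Gv {v : Fin n} {A : Finset (Fin n × Fin n)} (hA : FunArb n v A) :
    gof A ∈ Gv n v := by
  rw [Gv, Finset.mem_filter]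
  refine ⟨Finset.mem_univ _, gof_root hA, ?_, ?_⟩
  · intro u hu hc
    have := gof_mem hA hu
    rw [hc] at this
    exact mem_E0'.mp (hA.1 this) rfl
  · exact fun u => reach_iter hA u (hA.2.2.2 u)

lemma SArb_eq_sum_Gv (hn : 0 < n) (v : Fin n) (y : Fin n × Fin n → ℝ) :
    SArb n v y = ∑ g ∈ Gv n v, ∏ u ∈ Finset.univ.erase v, y (u, g u) := by
  rw [SArb]
  refine Finset.sum_bij (fun A _ => gof A) ?_ ?_ ?_ ?_
  · intro A hA
    exact gof_mem_Gv ((isArb_iff hn v A).mp (Finset.mem_filter.mp hA).2)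
  · intro A₁ h₁ A₂ h₂ heq
    have f₁ := (isArb_iff hn v A₁).mp (Finset.mem_filter.mp h₁).2
    have f₂ := (isArb_iff hn v A₂).mp (Finset.mem_filter.mp h₂).2
    rw [← Aof_gof f₁, ← Aof_gof f₂, heq]
  · intro g hg
    refine ⟨Aof n v g, ?_, gof_Aof hg⟩
    exact Finset.mem_filter.mpr ⟨Finset.mem_univ _, (isArb_iff hn v _).mpr (funArb_Aof hg)⟩
  · intro A hA
    have fA := (isArb_iff hn v A).mp (Finset.mem_filter.mp hA).2
    conv_lhs => rw [← Aof_gof fA]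
    rw [Aof, Finset.prod_image]
    intro a _ b _ hab
    exact congrArg Prod.fst hab

/-! #### Iterate lemmas -/

lemma eq_of_periodic_of_reach_fixed {g : Fin n → Fin n} {a t : Fin n} {p : ℕ}
    (hp : 0 < p) (hpa : g^[p] a = a) (ht : g t = t) {m : ℕ} (hm : g^[m] a = t) :
    a = t := by
  have hstay : ∀ j, g^[m + j] a = t := by
    intro j
    rw [add_comm, Function.iterate_add_apply, hm, Function.iterate_fixed ht]
  have hper : ∀ q, g^[p * q] a = a := by
    intro q
    induction q with
    | zero => rfl
    | succ q ih => rw [mul_add, mul_one, Function.iterate_add_apply, hpa, ih]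
  have hge : m ≤ p * (m + 1) := by nlinarith
  calc a = g^[p * (m + 1)] a := (hper (m + 1)).symm
    _ = g^[m + (p * (m + 1) - m)] a := by congr 1; omega
    _ = t := hstay _

lemma iterate_eq_of_agree {g h : Fin n → Fin n} {a : Fin n} (K : ℕ)
    (hagree : ∀ j, j < K → g (g^[j] a) = h (g^[j] a)) :
    ∀ j, j ≤ K → g^[j] a = h^[j] a := by
  intro j
  induction j with
  | zero => intro _; rfl
  | succ j ih =>
      intro hj
      rw [Function.iterate_succ_apply', Function.iterate_succ_apply',
        ← ih (by omega), ← hagree j (by omega)]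

noncomputable def Hset (n : ℕ) (r : Fin n) : Finset (Fin n → Fin n) :=
  Finset.univ.filter (fun h => (∀ u, h u ≠ u) ∧ ∀ u, ∃ k, h^[k] u = r)


lemma mem_Hset {r : Fin n} {h : Fin n → Fin n} :
    h ∈ Hset n r ↔ (∀ u, h u ≠ u) ∧ ∀ u, ∃ k, h^[k] u = r := by
  simp [Hset]

lemma mem_Gv {v : Fin n} {g : Fin n → Fin n} :
    g ∈ Gv n v ↔ g v = v ∧ (∀ u, u ≠ v → g u ≠ u) ∧ ∀ u, ∃ k, g^[k] u = v := by
  simp [Gv]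

lemma W_eq_right (hn : 0 < n) (r : Fin n) (y : Fin n × Fin n → ℝ) :
    (∑ h ∈ Hset n r, ∏ u, y (u, h u))
      = (∑ w ∈ Finset.univ.erase r, y (r, w)) * SArb n r y := by
  rw [SArb_eq_sum_Gv hn, Finset.sum_mul_sum, ← Finset.sum_product']
  refine (Finset.sum_bij (fun p _ => Function.update p.2 r p.1) ?_ ?_ ?_ ?_).symm
  · rintro ⟨w, g⟩ hp
    obtain ⟨hw, hg⟩ := Finset.mem_product.mp hp
    dsimp only at hw hg ⊢
    obtain ⟨hgv, hgne, hgreach⟩ := mem_Gv.mp hg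
    have hwr : w ≠ r := Finset.ne_of_mem_erase hw
    rw [mem_Hset]
    constructor
    · intro u
      by_cases hu : u = r
      · subst hu; rwa [Function.update_self]
      · rw [Function.update_of_ne hu]; exact hgne u hu
    · have claim : ∀ (k : ℕ) (u : Fin n), g^[k] u = r →
          ∃ m, (Function.update g r w)^[m] u = r := by
        intro k
        induction k with
        | zero => intro u hu; exact ⟨0, hu⟩
        | succ k ih =>
            intro u hu
            by_cases hur : u = r
            · exact ⟨0, hur⟩
            · obtain ⟨m, hm⟩ := ih (g u) (by rwa [Function.iterate_succ_apply] at hu)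
              exact ⟨m + 1, by rwa [Function.iterate_succ_apply, Function.update_of_ne hur]⟩
      intro u
      obtain ⟨k, hk⟩ := hgreach u
      exact claim k u hk
  · rintro ⟨w₁, g₁⟩ h₁ ⟨w₂, g₂⟩ h₂ heq
    simp only at heq
    obtain ⟨hw₁, hg₁⟩ := Finset.mem_product.mp h₁
    obtain ⟨hw₂, hg₂⟩ := Finset.mem_product.mp h₂
    dsimp only at hw₁ hg₁ hw₂ hg₂
    have hgv₁ := (mem_Gv.mp hg₁).1
    have hgv₂ := (mem_Gv.mp hg₂).1
    have hww : w₁ = w₂ := by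
      have := congrFun heq r
      rwa [Function.update_self, Function.update_self] at this
    have hgg : g₁ = g₂ := by
      funext u
      by_cases hu : u = r
      · subst hu; rw [hgv₁, hgv₂]
      · have := congrFun heq u
        rwa [Function.update_of_ne hu, Function.update_of_ne hu] at this
    rw [Prod.ext_iff]; exact ⟨hww, hgg⟩
  · intro h hh
    obtain ⟨hne, hreach⟩ := mem_Hset.mp hh
    set g : Fin n → Fin n := Function.update h r r with hgdef
    have hgmem : g ∈ Gv n r := by
      rw [mem_Gv]
      refine ⟨Function.update_self _ _ _, ?_, ?_⟩
      · intro u hu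
        rw [hgdef, Function.update_of_ne hu]; exact hne u
      · have claim : ∀ (k : ℕ) (u : Fin n), h^[k] u = r → ∃ m, g^[m] u = r := by
          intro k
          induction k with
          | zero => intro u hu; exact ⟨0, hu⟩
          | succ k ih =>
              intro u hu
              by_cases hur : u = r
              · exact ⟨0, hur⟩
              · obtain ⟨m, hm⟩ := ih (h u) (by rwa [Function.iterate_succ_apply] at hu)
                refine ⟨m + 1, ?_⟩
                rw [Function.iterate_succ_apply, hgdef, Function.update_of_ne hur]
                exact hm
        intro u
        obtain ⟨k, hk⟩ := hreach u
        exact claim k u hk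
    refine ⟨(h r, g), Finset.mem_product.mpr
      ⟨Finset.mem_erase.mpr ⟨hne r, Finset.mem_univ _⟩, hgmem⟩, ?_⟩
    dsimp only
    funext u
    by_cases hu : u = r
    · subst hu; simp
    · rw [Function.update_of_ne hu, hgdef, Function.update_of_ne hu]
  · rintro ⟨w, g⟩ hp
    obtain ⟨hw, hg⟩ := Finset.mem_product.mp hp
    dsimp only
    rw [← Finset.mul_prod_erase Finset.univ _ (Finset.mem_univ r), Function.update_self]
    congr 1
    refine Finset.prod_congr rfl (fun u hu => ?_)
    rw [Function.update_of_ne (Finset.ne_of_mem_erase hu)]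

lemma W_eq_left (hn : 0 < n) (r : Fin n) (y : Fin n × Fin n → ℝ) :
    (∑ h ∈ Hset n r, ∏ u, y (u, h u))
      = ∑ v ∈ Finset.univ.erase r, y (v, r) * SArb n v y := by
  have hrw : ∀ v ∈ Finset.univ.erase r, y (v, r) * SArb n v y
      = ∑ g ∈ Gv n v, y (v, r) * ∏ u ∈ Finset.univ.erase v, y (u, g u) := by
    intro v _; rw [SArb_eq_sum_Gv hn, Finset.mul_sum]
  rw [Finset.sum_congr rfl hrw, Finset.sum_sigma']
  refine (Finset.sum_bij (fun (p : Σ _v : Fin n, Fin n → Fin n) _ => Function.update p.2 p.1 r) ?_ ?_ ?_ ?_).symm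
  · rintro ⟨v, g⟩ hp
    rw [Finset.mem_sigma] at hp
    obtain ⟨hv, hg⟩ := hp
    dsimp only at hv hg ⊢
    have hvr : v ≠ r := Finset.ne_of_mem_erase hv
    obtain ⟨hgv, hgne, hgreach⟩ := mem_Gv.mp hg
    rw [mem_Hset]
    constructor
    · intro u
      by_cases hu : u = v
      · subst hu; rw [Function.update_self]; exact fun hc => hvr hc.symm
      · rw [Function.update_of_ne hu]; exact hgne u hu
    · have claim : ∀ (k : ℕ) (u : Fin n), g^[k] u = v →
          ∃ m, (Function.update g v r)^[m] u = r := by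
        intro k
        induction k with
        | zero =>
            intro u hu
            have hu' : u = v := hu
            subst hu'
            exact ⟨1, by rw [Function.iterate_one, Function.update_self]⟩
        | succ k ih =>
            intro u hu
            by_cases huv : u = v
            · exact ⟨1, by rw [Function.iterate_one, huv, Function.update_self]⟩
            · obtain ⟨m, hm⟩ := ih (g u) (by rwa [Function.iterate_succ_apply] at hu)
              exact ⟨m + 1, by rwa [Function.iterate_succ_apply, Function.update_of_ne huv]⟩
      intro u
      obtain ⟨k, hk⟩ := hgreach u
      exact claim k u hk
  · rintro ⟨v₁, g₁⟩ h₁ ⟨v₂, g₂⟩ h₂ heq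
    simp only at heq
    rw [Finset.mem_sigma] at h₁ h₂
    obtain ⟨hv₁, hg₁⟩ := h₁
    obtain ⟨hv₂, hg₂⟩ := h₂
    dsimp only at hv₁ hg₁ hv₂ hg₂
    have hv₁r : v₁ ≠ r := Finset.ne_of_mem_erase hv₁
    have hv₂r : v₂ ≠ r := Finset.ne_of_mem_erase hv₂
    obtain ⟨hgv₁, hgne₁, hgreach₁⟩ := mem_Gv.mp hg₁
    obtain ⟨hgv₂, hgne₂, hgreach₂⟩ := mem_Gv.mp hg₂
    by_cases hvv : v₁ = v₂
    · subst hvv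
      have hgg : g₁ = g₂ := by
        funext u
        by_cases hu : u = v₁
        · subst hu; rw [hgv₁, hgv₂]
        · have := congrFun heq u
          rwa [Function.update_of_ne hu, Function.update_of_ne hu] at this
      rw [hgg]
    · exfalso
      have h12 : g₁ v₂ = r := by
        have := congrFun heq v₂
        rwa [Function.update_of_ne (fun hc => hvv hc.symm), Function.update_self] at this
      have h21 : g₂ v₁ = r := by
        have := congrFun heq v₁
        rw [Function.update_self, Function.update_of_ne hvv] at this
        exact this.symm
      have hagree : ∀ u, u ≠ v₁ → u ≠ v₂ → g₁ u = g₂ u := by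
        intro u hu1 hu2
        have := congrFun heq u
        rwa [Function.update_of_ne hu1, Function.update_of_ne hu2] at this
      have hexK : ∃ k, g₁^[k] r = v₁ := hgreach₁ r
      let K := Nat.find hexK
      have hK : g₁^[K] r = v₁ := Nat.find_spec hexK
      have hKmin : ∀ j, j < K → g₁^[j] r ≠ v₁ := fun j hj => Nat.find_min hexK hj
      by_cases hcase : ∃ j, j < K ∧ g₁^[j] r = v₂
      · obtain ⟨j, hj, hjv⟩ := hcase
        have hper : g₁^[j + 1] r = r := by
          rw [Function.iterate_succ_apply', hjv, h12]
        exact hv₁r (eq_of_periodic_of_reach_fixed (Nat.succ_pos j) hper hgv₁ hK).symm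
      · push_neg at hcase
        have hagree' : ∀ j, j < K → g₁ (g₁^[j] r) = g₂ (g₁^[j] r) := by
          intro j hj
          exact hagree _ (hKmin j hj) (hcase j hj)
        have hK2 : g₂^[K] r = v₁ := by
          rw [← iterate_eq_of_agree K hagree' K le_rfl]; exact hK
        have hper : g₂^[K + 1] r = r := by
          rw [Function.iterate_succ_apply', hK2, h21]
        obtain ⟨m, hm⟩ := hgreach₂ r
        exact hv₂r (eq_of_periodic_of_reach_fixed (Nat.succ_pos K) hper hgv₂ hm).symm
  · intro h hh
    obtain ⟨hne, hreach⟩ := mem_Hset.mp hh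
    have hex : ∃ p, 0 < p ∧ h^[p] r = r := by
      obtain ⟨k, hk⟩ := hreach (h r)
      exact ⟨k + 1, Nat.succ_pos k, by rwa [Function.iterate_succ_apply]⟩
    let p := Nat.find hex
    have hp : 0 < p ∧ h^[p] r = r := Nat.find_spec hex
    have hp2 : 2 ≤ p := by
      rcases Nat.lt_or_ge p 2 with h2 | h2
      · interval_cases p
        · exact absurd hp.1 (lt_irrefl 0)
        · exact absurd hp.2 (by simpa using hne r)
      · exact h2
    set v := h^[p - 1] r with hvdef
    have hvr : h v = r := by
      have h1 : h^[p - 1 + 1] r = h (h^[p - 1] r) := Function.iterate_succ_apply' h (p - 1) r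
      rw [hvdef, ← h1, show p - 1 + 1 = p by omega]
      exact hp.2
    have hvner : v ≠ r := by
      intro hc
      exact Nat.find_min hex (show p - 1 < p by omega) ⟨by omega, by rw [← hvdef]; exact hc⟩
    set g : Fin n → Fin n := Function.update h v v with hgdef
    have hgmem : g ∈ Gv n v := by
      rw [mem_Gv]
      refine ⟨Function.update_self _ _ _, ?_, ?_⟩
      · intro u hu
        rw [hgdef, Function.update_of_ne hu]; exact hne u
      · intro u
        have hHv : ∃ M, h^[M] u = v := by
          obtain ⟨m, hm⟩ := hreach u
          refine ⟨(p - 1) + m, ?_⟩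
          rw [Function.iterate_add_apply, hm, ← hvdef]
        let M := Nat.find hHv
        have hM : h^[M] u = v := Nat.find_spec hHv
        have hMmin : ∀ j, j < M → h^[j] u ≠ v := fun j hj => Nat.find_min hHv hj
        refine ⟨M, ?_⟩
        have hagree' : ∀ j, j < M → h (h^[j] u) = g (h^[j] u) := by
          intro j hj
          rw [hgdef, Function.update_of_ne (hMmin j hj)]
        rw [← iterate_eq_of_agree M hagree' M le_rfl]
        exact hM
    refine ⟨⟨v, g⟩, Finset.mem_sigma.mpr
      ⟨Finset.mem_erase.mpr ⟨hvner, Finset.mem_univ _⟩, hgmem⟩, ?_⟩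
    simp only
    funext u
    by_cases hu : u = v
    · subst hu; rw [Function.update_self, hvr]
    · rw [Function.update_of_ne hu, hgdef, Function.update_of_ne hu]
  · rintro ⟨v, g⟩ hp
    rw [Finset.mem_sigma] at hp
    obtain ⟨hv, hg⟩ := hp
    dsimp only
    rw [← Finset.mul_prod_erase Finset.univ (fun u => y (u, Function.update g v r u))
      (Finset.mem_univ v), Function.update_self]
    congr 1
    refine Finset.prod_congr rfl (fun u hu => ?_)
    rw [Function.update_of_ne (Finset.ne_of_mem_erase hu)]

lemma star_identity (hn : 0 < n) (r : Fin n) (y : Fin n × Fin n → ℝ) :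
    ∑ v ∈ Finset.univ.erase r, y (v, r) * SArb n v y
      = (∑ w ∈ Finset.univ.erase r, y (r, w)) * SArb n r y :=
  (W_eq_left hn r y).symm.trans (W_eq_right hn r y)


lemma sArb_root_indep (hn : 0 < n) (y : Fin n × Fin n → ℝ)
    (hy : ∀ e, 0 ≤ y e) (hc : memCircBar n y) (r s : Fin n) :
    SArb n r y = SArb n s y := by
  set p : Fin n → ℝ := fun v => SArb n v y with hp
  have hpnn : ∀ v, 0 ≤ p v :=
    fun v => Finset.sum_nonneg fun A _ => Finset.prod_nonneg fun e _ => hy e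
  obtain ⟨v₀, -, hv₀⟩ := Finset.exists_max_image Finset.univ p ⟨r, Finset.mem_univ r⟩
  have key : ∀ w, p w = p v₀ → ∀ u, y (u, w) ≠ 0 → u ≠ w → p u = p v₀ := by
    intro w hw u hyuw hune
    have hstar := star_identity hn w y
    have hcirc : (∑ v ∈ Finset.univ.erase w, y (w, v))
        = ∑ v ∈ Finset.univ.erase w, y (v, w) := by
      have h0 := hc w
      rw [filter_ne_univ] at h0
      linarith
    rw [hcirc] at hstar
    have hzero : ∑ v ∈ Finset.univ.erase w, y (v, w) * (p v₀ - p v) = 0 := by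
      have hexp : ∀ v ∈ Finset.univ.erase w, y (v, w) * (p v₀ - p v)
          = y (v, w) * p v₀ - y (v, w) * p v := fun v _ => by ring
      rw [Finset.sum_congr rfl hexp, Finset.sum_sub_distrib, ← Finset.sum_mul]
      have : (∑ v ∈ Finset.univ.erase w, y (v, w) * p v)
          = (∑ v ∈ Finset.univ.erase w, y (v, w)) * p w := hstar
      rw [this, hw]
      ring
    have hterm := (Finset.sum_eq_zero_iff_of_nonneg
      (fun v _ => mul_nonneg (hy _) (sub_nonneg.mpr (hv₀ v (Finset.mem_univ v))))).mp
      hzero u (Finset.mem_erase.mpr ⟨hune, Finset.mem_univ u⟩)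
    rcases mul_eq_zero.mp hterm with h | h
    · exact absurd h hyuw
    · linarith
  rcases eq_or_lt_of_le (hpnn v₀) with h0 | hpos
  · have hall : ∀ v, p v = 0 := fun v => le_antisymm (h0 ▸ hv₀ v (Finset.mem_univ v)) (hpnn v)
    show p r = p s
    rw [hall r, hall s]
  · have hne : p v₀ ≠ 0 := ne_of_gt hpos
    obtain ⟨A, hAmem, hAne⟩ := Finset.exists_ne_zero_of_sum_ne_zero hne
    have hAarb : IsArb n v₀ A := (Finset.mem_filter.mp hAmem).2
    have hedge : ∀ e ∈ A, y e ≠ 0 := fun e he => Finset.prod_ne_zero_iff.mp hAne e he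
    have hstep : ∀ u, reachesIn n A u v₀ → p u = p v₀ := by
      intro u hu
      induction hu using Relation.ReflTransGen.head_induction_on with
      | refl => rfl
      | head h hbc ih =>
          rename_i a c
          have hac : a ≠ c := mem_E0'.mp (hAarb.1.1 h)
          exact key c ih a (hedge (a, c) h) hac
    show p r = p s
    rw [hstep r (hAarb.2 r), hstep s (hAarb.2 s)]


/-! #### From the `Pfr` sum to `SArb` of `Mf` -/

lemma undirGraph_adj {D : Finset (Fin n × Fin n)} {u v : Fin n} :
    (undirGraph n D).Adj u v ↔ u ≠ v ∧ ((u, v) ∈ D ∨ (v, u) ∈ D) := Iff.rfl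

lemma no_pair {r : Fin n} {A : Finset (Fin n × Fin n)} (hA : FunArb n r A)
    {a b : Fin n} (h1 : (a, b) ∈ A) (h2 : (b, a) ∈ A) : False := by
  have har : a ≠ r := by rintro rfl; exact hA.2.2.1 b h1
  have hbr : b ≠ r := by rintro rfl; exact hA.2.2.1 a h2
  have hga : gof A a = b := gof_eq hA h1
  have hgb : gof A b = a := gof_eq hA h2
  have horbit : ∀ k, (gof A)^[k] a = a ∨ (gof A)^[k] a = b := by
    intro k
    induction k with
    | zero => exact Or.inl rfl
    | succ k ih =>
        rw [Function.iterate_succ_apply']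
        rcases ih with h | h <;> rw [h]
        · exact Or.inr hga
        · exact Or.inl hgb
  obtain ⟨k, hk⟩ := reach_iter hA a (hA.2.2.2 a)
  rcases horbit k with h | h <;> rw [hk] at h
  · exact har h.symm
  · exact hbr h.symm

lemma inter_union_sdiff' (T A : Finset (Fin n × Fin n)) : T ∩ A ∪ T \ A = T := by
  ext e
  simp only [Finset.mem_union, Finset.mem_inter, Finset.mem_sdiff]
  tauto

lemma fiber_sum (hn : 0 < n) {E : Finset (Fin n × Fin n)}
    {f x : Fin n × Fin n → ℝ}
    (hf01 : ∀ e, f e = 0 ∨ f e = 1) (hxE : ∀ e, e ∉ E → x e = 0)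
    (hfE : ∀ e, e ∉ E → f e = 0)
    {r : Fin n} {A : Finset (Fin n × Fin n)} (hA : IsArb n r A) :
    ∑ T ∈ Finset.univ.filter (fun T : Finset (Fin n × Fin n) =>
        (IsDirTree n T ∧ T ⊆ E ∧ IsArb n r (flipSet n f T)) ∧ flipSet n f T = A),
      ∏ e ∈ T, (if f e = 1 then 1 - x e else x e)
    = ∏ e ∈ A, Mf n f x e := by
  have hFA : FunArb n r A := (isArb_iff hn r A).mp hA
  have hAsub : A ⊆ E0 n := hFA.1
  have hAcard : A.card = n - 1 := hA.1.2.1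
  have hconn := hA.1.2.2
  have hMf : ∀ e ∈ A, Mf n f x e = x e * (1 - f e) + (1 - x (rev e)) * f (rev e) :=
    fun e _ => rfl
  rw [Finset.prod_congr rfl hMf, Finset.prod_add]
  have hcompat_zero : ∀ S ∈ A.powerset,
      ((∏ e ∈ S, x e * (1 - f e)) * ∏ e ∈ A \ S, (1 - x (rev e)) * f (rev e)) ≠ 0 →
      ((∀ e ∈ S, f e = 0 ∧ e ∈ E) ∧ (∀ e ∈ A \ S, f (rev e) = 1 ∧ rev e ∈ E)) := by
    intro S _ hval
    constructor
    · intro e he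
      have h1 : (∏ e ∈ S, x e * (1 - f e)) ≠ 0 := left_ne_zero_of_mul hval
      have h2 := Finset.prod_ne_zero_iff.mp h1 e he
      have hx : x e ≠ 0 := left_ne_zero_of_mul h2
      have hfne : f e ≠ 1 := fun hc => (right_ne_zero_of_mul h2) (by rw [hc]; ring)
      have heE : e ∈ E := by by_contra hcE; exact hx (hxE e hcE)
      exact ⟨(hf01 e).resolve_right hfne, heE⟩
    · intro e he
      have h1 : (∏ e ∈ A \ S, (1 - x (rev e)) * f (rev e)) ≠ 0 := right_ne_zero_of_mul hval
      have h2 := Finset.prod_ne_zero_iff.mp h1 e he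
      have hf2 : f (rev e) ≠ 0 := right_ne_zero_of_mul h2
      have hrE : rev e ∈ E := by by_contra hcE; exact hf2 (hfE _ hcE)
      exact ⟨(hf01 (rev e)).resolve_left hf2, hrE⟩
  rw [← Finset.sum_filter_of_ne hcompat_zero]
  have hmemT : ∀ (S : Finset (Fin n × Fin n)) (e : Fin n × Fin n),
      e ∈ S ∪ (A \ S).image rev ↔ (e ∈ S ∨ (rev e ∈ A ∧ rev e ∉ S)) := by
    intro S e
    rw [Finset.mem_union, Finset.mem_image]
    apply or_congr_right
    constructor
    · rintro ⟨a, ha, rfl⟩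
      rw [Finset.mem_sdiff] at ha
      rw [rev_rev']
      exact ha
    · intro h
      exact ⟨rev e, Finset.mem_sdiff.mpr h, rev_rev' e⟩
  have hdisj : ∀ S : Finset (Fin n × Fin n), S ⊆ A → Disjoint S ((A \ S).image rev) := by
    intro S hSA
    rw [Finset.disjoint_left]
    intro e heS heI
    obtain ⟨a, ha, rfl⟩ := Finset.mem_image.mp heI
    obtain ⟨haA, -⟩ := Finset.mem_sdiff.mp ha
    exact no_pair hFA haA (hSA heS)
  have hinter : ∀ S : Finset (Fin n × Fin n), S ⊆ A →
      (S ∪ (A \ S).image rev) ∩ A = S := by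
    intro S hSA
    ext e
    rw [Finset.mem_inter, Finset.mem_union]
    constructor
    · rintro ⟨h | h, heA⟩
      · exact h
      · obtain ⟨a, ha, rfl⟩ := Finset.mem_image.mp h
        obtain ⟨haA, -⟩ := Finset.mem_sdiff.mp ha
        exact (no_pair hFA haA heA).elim
    · intro h
      exact ⟨Or.inl h, hSA h⟩
  refine (Finset.sum_bij (fun S _ => S ∪ (A \ S).image rev) ?_ ?_ ?_ ?_).symm
  · -- maps to the fiber
    intro S hS
    obtain ⟨hSpow, hc1, hc2⟩ := Finset.mem_filter.mp hS
    obtain ⟨hc1, hc2⟩ := (⟨hc1, hc2⟩ :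
      (∀ e ∈ S, f e = 0 ∧ e ∈ E) ∧ (∀ e ∈ A \ S, f (rev e) = 1 ∧ rev e ∈ E))
    have hSA : S ⊆ A := Finset.mem_powerset.mp hSpow
    have hflip : flipSet n f (S ∪ (A \ S).image rev) = A := by
      rw [flipSet, Finset.image_union, Finset.image_image]
      have h1 : S.image (flipEdge n f) = S := by
        rw [Finset.image_congr (g := id) ?_, Finset.image_id]
        intro e he
        have h0 := (hc1 e he).1
        simp [flipEdge, h0]
      have h2 : (A \ S).image (flipEdge n f ∘ rev) = A \ S := by
        rw [Finset.image_congr (g := id) ?_, Finset.image_id]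
        intro e he
        have h0 := (hc2 e he).1
        simp [flipEdge, h0, rev_rev']
      rw [h1, h2, Finset.union_sdiff_of_subset hSA]
    have hcardT : (S ∪ (A \ S).image rev).card = n - 1 := by
      rw [Finset.card_union_of_disjoint (hdisj S hSA),
        Finset.card_image_of_injective _ rev_inj']
      have := Finset.card_sdiff_add_card_eq_card hSA
      omega
    have hsubT : S ∪ (A \ S).image rev ⊆ E0 n := by
      intro e he
      rcases Finset.mem_union.mp he with h | h
      · exact hAsub (hSA h)
      · obtain ⟨a, ha, rfl⟩ := Finset.mem_image.mp h
        exact rev_mem_E0' (hAsub (Finset.mem_sdiff.mp ha).1)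
    have hgeq : undirGraph n (S ∪ (A \ S).image rev) = undirGraph n A := by
      ext u v
      rw [undirGraph_adj, undirGraph_adj]
      apply and_congr_right
      intro hne2
      rw [hmemT S (u, v), hmemT S (v, u)]
      simp only [rev]
      have hsub1 : (u, v) ∈ S → (u, v) ∈ A := fun h => hSA h
      have hsub2 : (v, u) ∈ S → (v, u) ∈ A := fun h => hSA h
      constructor
      · rintro ((h | ⟨h, -⟩) | (h | ⟨h, -⟩))
        · exact Or.inl (hsub1 h)
        · exact Or.inr h
        · exact Or.inr (hsub2 h)
        · exact Or.inl h
      · rintro (h | h)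
        · by_cases hS' : (u, v) ∈ S
          · exact Or.inl (Or.inl hS')
          · exact Or.inr (Or.inr ⟨h, hS'⟩)
        · by_cases hS' : (v, u) ∈ S
          · exact Or.inr (Or.inl hS')
          · exact Or.inl (Or.inr ⟨h, hS'⟩)
    refine Finset.mem_filter.mpr ⟨Finset.mem_univ _, ⟨⟨hsubT, hcardT, ?_⟩, ?_, ?_⟩, hflip⟩
    · rw [hgeq]; exact hconn
    · intro e he
      rcases Finset.mem_union.mp he with h | h
      · exact (hc1 e h).2
      · obtain ⟨a, ha, rfl⟩ := Finset.mem_image.mp h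
        exact (hc2 a ha).2
    · rw [hflip]; exact hA
  · -- injective
    intro S₁ h₁ S₂ h₂ heq
    have hSA₁ : S₁ ⊆ A := Finset.mem_powerset.mp (Finset.mem_filter.mp h₁).1
    have hSA₂ : S₂ ⊆ A := Finset.mem_powerset.mp (Finset.mem_filter.mp h₂).1
    rw [← hinter S₁ hSA₁, ← hinter S₂ hSA₂, heq]
  · -- surjective
    intro T hT
    obtain ⟨-, ⟨⟨hTdt, hTE, -⟩, hTflip⟩⟩ := Finset.mem_filter.mp hT
    have hTcard : T.card = n - 1 := hTdt.2.1
    have h1 : ∀ e ∈ T, flipEdge n f e ∈ A := fun e he =>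
      hTflip ▸ Finset.mem_image_of_mem _ he
    have hYf : ∀ e ∈ T \ A, f e = 1 := by
      intro e he
      obtain ⟨heT, heA⟩ := Finset.mem_sdiff.mp he
      by_contra hcc
      have h2 := h1 e heT
      rw [flipEdge, if_neg hcc] at h2
      exact heA h2
    have hXf : ∀ e ∈ T ∩ A, f e ≠ 1 := by
      intro e he hcc
      obtain ⟨heT, heA⟩ := Finset.mem_inter.mp he
      have h2 := h1 e heT
      rw [flipEdge, if_pos hcc] at h2
      exact no_pair hFA heA h2
    have hTsplit : T ∩ A ∪ T \ A = T := inter_union_sdiff' T A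
    have hAeq : A = (T ∩ A) ∪ (T \ A).image rev := by
      have h2 : flipSet n f T = (T ∩ A) ∪ (T \ A).image rev := by
        rw [flipSet]
        conv_lhs => rw [← hTsplit]
        rw [Finset.image_union]
        congr 1
        · rw [Finset.image_congr (g := id) ?_, Finset.image_id]
          intro e he
          have h0 := hXf e he
          simp [flipEdge, h0]
        · apply Finset.image_congr
          intro e he
          have h0 := hYf e he
          simp [flipEdge, h0]
      exact hTflip.symm.trans h2
    have hZsub : (T \ A).image rev ⊆ A := by
      intro e he
      have hmem2 : e ∈ (T ∩ A) ∪ (T \ A).image rev := Finset.mem_union_right _ he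
      rwa [← hAeq] at hmem2
    have hcardZ : ((T \ A).image rev).card = (T \ A).card :=
      Finset.card_image_of_injective _ rev_inj'
    have hcardX : (T ∩ A).card + (T \ A).card = T.card := Finset.card_inter_add_card_sdiff T A
    have hXA : T ∩ A ⊆ A := Finset.inter_subset_right
    have hAle : A.card ≤ (T ∩ A).card + ((T \ A).image rev).card := by
      calc A.card = ((T ∩ A) ∪ (T \ A).image rev).card := by rw [← hAeq]
        _ ≤ _ := Finset.card_union_le _ _
    have hAX : A \ (T ∩ A) = (T \ A).image rev := by
      have hsub' : A \ (T ∩ A) ⊆ (T \ A).image rev := by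
        intro e he
        obtain ⟨heA, heX⟩ := Finset.mem_sdiff.mp he
        have : e ∈ (T ∩ A) ∪ (T \ A).image rev := hAeq ▸ heA
        rcases Finset.mem_union.mp this with h | h
        · exact absurd h heX
        · exact h
      have hcardsd : (A \ (T ∩ A)).card = A.card - (T ∩ A).card :=
        Finset.card_sdiff_of_subset hXA
      apply Finset.eq_of_subset_of_card_le hsub'
      omega
    refine ⟨T ∩ A, ?_, ?_⟩
    · refine Finset.mem_filter.mpr ⟨Finset.mem_powerset.mpr hXA, ?_, ?_⟩
      · intro e he
        have heT : e ∈ T := (Finset.mem_inter.mp he).1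
        have heE : e ∈ E := hTE heT
        exact ⟨(hf01 e).resolve_right (hXf e he), heE⟩
      · intro e he
        rw [hAX] at he
        obtain ⟨a, ha, rfl⟩ := Finset.mem_image.mp he
        have haT : a ∈ T := (Finset.mem_sdiff.mp ha).1
        constructor
        · rw [rev_rev']; exact hYf a ha
        · rw [rev_rev']; exact hTE haT
    · show T ∩ A ∪ (A \ (T ∩ A)).image rev = T
      rw [hAX, Finset.image_image]
      have himid : (T \ A).image (rev ∘ rev) = T \ A :=
        (Finset.image_congr (fun e _ => rev_rev' e)).trans Finset.image_id
      rw [himid, hTsplit]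
  · -- values
    intro S hS
    obtain ⟨hSpow, hc1, hc2⟩ := Finset.mem_filter.mp hS
    obtain ⟨hc1, hc2⟩ := (⟨hc1, hc2⟩ :
      (∀ e ∈ S, f e = 0 ∧ e ∈ E) ∧ (∀ e ∈ A \ S, f (rev e) = 1 ∧ rev e ∈ E))
    have hSA : S ⊆ A := Finset.mem_powerset.mp hSpow
    rw [Finset.prod_union (hdisj S hSA),
      Finset.prod_image (fun a _ b _ h => rev_inj' h)]
    congr 1
    · refine Finset.prod_congr rfl (fun e he => ?_)
      rw [(hc1 e he).1]
      norm_num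
    · refine Finset.prod_congr rfl (fun e he => ?_)
      rw [(hc2 e he).1]
      norm_num


lemma pfr_sum_eq (hn : 0 < n) {E : Finset (Fin n × Fin n)}
    {f x : Fin n × Fin n → ℝ}
    (hf01 : ∀ e, f e = 0 ∨ f e = 1) (hxE : ∀ e, e ∉ E → x e = 0)
    (hfE : ∀ e, e ∉ E → f e = 0) (r : Fin n) :
    ∑ T ∈ Finset.univ.filter (fun T : Finset (Fin n × Fin n) =>
        IsDirTree n T ∧ T ⊆ E ∧ IsArb n r (flipSet n f T)),
      ∏ e ∈ T, (if f e = 1 then 1 - x e else x e)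
    = SArb n r (Mf n f x) := by
  rw [SArb]
  rw [← Finset.sum_fiberwise_of_maps_to (g := flipSet n f)
    (fun T hT => Finset.mem_filter.mpr ⟨Finset.mem_univ _, (Finset.mem_filter.mp hT).2.2.2⟩)]
  refine Finset.sum_congr rfl (fun A hA => ?_)
  have hAarb : IsArb n r A := (Finset.mem_filter.mp hA).2
  rw [Finset.filter_filter]
  exact fiber_sum hn hf01 hxE hfE hAarb

lemma circ_Mf {E : Finset (Fin n × Fin n)} (hE : E ⊆ E0 n) {d : Fin n → ℤ}
    {f x : Fin n × Fin n → ℝ} (hf : memFlowPolytope n E d f)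
    (hx : memFlowPolytope n E d x) :
    memCircBar n (Mf n f x) := by
  intro v
  rw [filter_ne_univ]
  have hloop : ∀ (z : Fin n × Fin n → ℝ), memFlowPolytope n E d z → z (v, v) = 0 := by
    intro z hz
    apply hz.1
    intro hc
    exact mem_E0'.mp (hE hc) rfl
  have hsum : ∀ (z : Fin n × Fin n → ℝ), memFlowPolytope n E d z →
      (∑ i ∈ Finset.univ.erase v, z (v, i)) - (∑ i ∈ Finset.univ.erase v, z (i, v))
        = (d v : ℝ) := by
    intro z hz
    have h1 := hz.2.2 v
    rw [← Finset.add_sum_erase _ (fun i => z (v, i)) (Finset.mem_univ v),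
        ← Finset.add_sum_erase _ (fun i => z (i, v)) (Finset.mem_univ v), hloop z hz] at h1
    linarith [h1]
  have hxs := hsum x hx
  have hfs := hsum f hf
  rw [← Finset.sum_sub_distrib]
  have hterm : ∀ i ∈ Finset.univ.erase v,
      Mf n f x (v, i) - Mf n f x (i, v)
        = (x (v, i) - x (i, v)) + (f (i, v) - f (v, i)) := by
    intro i _
    show (x (v, i) * (1 - f (v, i)) + (1 - x (i, v)) * f (i, v))
        - (x (i, v) * (1 - f (i, v)) + (1 - x (v, i)) * f (v, i)) = _
    ring
  rw [Finset.sum_congr rfl hterm, Finset.sum_add_distrib, Finset.sum_sub_distrib,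
    Finset.sum_sub_distrib]
  linarith

lemma Mf_nonneg {E : Finset (Fin n × Fin n)} {d : Fin n → ℤ} {f x : Fin n × Fin n → ℝ}
    (hf : IsVertex n E d f) (hx : memFlowPolytope n E d x) (e : Fin n × Fin n) :
    0 ≤ Mf n f x e := by
  have hx01 : ∀ e', 0 ≤ x e' ∧ x e' ≤ 1 := by
    intro e'
    by_cases he : e' ∈ E
    · exact ⟨(hx.2.1 e' he).1, (hx.2.1 e' he).2⟩
    · rw [hx.1 e' he]; norm_num
  have hf01 : ∀ e', f e' = 0 ∨ f e' = 1 := by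
    intro e'
    by_cases he : e' ∈ E
    · exact hf.2 e' he
    · exact Or.inl (hf.1.1 e' he)
  apply add_nonneg
  · apply mul_nonneg (hx01 e).1
    rcases hf01 e with h | h <;> rw [h] <;> norm_num
  · apply mul_nonneg
    · linarith [(hx01 (rev e)).2]
    · rcases hf01 (rev e) with h | h <;> rw [h] <;> norm_num

end RootIndAux

/-- Root Independence Lemma: `P_{f,r}(x) = P_{f,s}(x)` on `P`. -/
theorem root_independence (n : ℕ) (hn : 2 ≤ n)
    (E : Finset (Fin n × Fin n)) (hE : E ⊆ E0 n) (d : Fin n → ℤ)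
    (f : Fin n × Fin n → ℝ) (hf : IsVertex n E d f)
    (r s : Fin n) (x : Fin n × Fin n → ℝ) (hx : memFlowPolytope n E d x) :
    Pfr n E f r x = Pfr n E f s x := by
  have hn0 : 0 < n := by omega
  have hf01 : ∀ e, f e = 0 ∨ f e = 1 := by
    intro e
    by_cases he : e ∈ E
    · exact hf.2 e he
    · exact Or.inl (hf.1.1 e he)
  have hfE : ∀ e, e ∉ E → f e = 0 := hf.1.1
  have hxE : ∀ e, e ∉ E → x e = 0 := hx.1
  rw [Pfr, Pfr, pfr_sum_eq hn0 hf01 hxE hfE r, pfr_sum_eq hn0 hf01 hxE hfE s,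
    sArb_root_indep hn0 (Mf n f x) (Mf_nonneg hf hx) (circ_Mf hE hf.1 hx) r s]
end

section
/- Let y : E₀ → ℝ lie in Circ̄, and let i, j ∈ [n]. Then SArb_i(y) = SArb_j(y); i.e., the arborescence-generating polynomial evaluated on any point of the circulation hyperplane is independent of the choice of root. -/
open Finset

open scoped Classical

/-! ### Auxiliary development for Statement 4 -/

section Aux

open Matrix

variable {n : ℕ}

/-- A matrix whose rows all sum to zero has zero determinant. -/
lemma det_eq_zero_of_row_sums (hn : 0 < n) (M : Matrix (Fin n) (Fin n) ℝ)
    (h : ∀ v, ∑ w, M v w = 0) : M.det = 0 := by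
  rw [← Matrix.exists_mulVec_eq_zero_iff]
  refine ⟨fun _ => 1, ?_, ?_⟩
  · intro h0
    have := congrFun h0 ⟨0, hn⟩
    simp at this
  · funext v
    simp [Matrix.mulVec, dotProduct, h v]

lemma det_updateRow_single (M : Matrix (Fin n) (Fin n) ℝ) (hn : 0 < n)
    (h : ∀ v, ∑ w, M v w = 0) (i j k : Fin n) :
    (M.updateRow i (Pi.single j 1)).det = (M.updateRow i (Pi.single k 1)).det := by
  have hadd : (Pi.single j 1 : Fin n → ℝ) = Pi.single k 1 + ((Pi.single j 1 : Fin n → ℝ) - Pi.single k 1) := by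
    funext x; simp
  rw [hadd, Matrix.det_updateRow_add]
  have hz : (M.updateRow i ((Pi.single j 1 : Fin n → ℝ) - Pi.single k 1)).det = 0 := by
    apply det_eq_zero_of_row_sums hn
    intro v
    by_cases hv : v = i
    · subst hv
      simp [Matrix.updateRow_self, Finset.sum_sub_distrib]
    · simp only [Matrix.updateRow_ne hv]
      exact h v
  rw [hz, add_zero]

lemma det_updateCol_single (M : Matrix (Fin n) (Fin n) ℝ) (hn : 0 < n)
    (h : ∀ w, ∑ v, M v w = 0) (j i k : Fin n) :
    (M.updateCol j (Pi.single i 1)).det = (M.updateCol j (Pi.single k 1)).det := by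
  have h1 : ∀ c : Fin n → ℝ, (M.updateCol j c).det = (Mᵀ.updateRow j c).det := by
    intro c
    rw [Matrix.updateRow_transpose, Matrix.det_transpose]
  rw [h1, h1]
  exact det_updateRow_single Mᵀ hn (fun v => h v) j i k

/-- Bordering: replacing column `j` by `e i` after replacing row `i` by `e j`
doesn't change the determinant. -/
lemma det_border (M : Matrix (Fin n) (Fin n) ℝ) (i j : Fin n) :
    ((M.updateRow i (Pi.single j 1)).updateCol j (Pi.single i 1)).det
      = (M.updateRow i (Pi.single j 1)).det := by
  set B := M.updateRow i (Pi.single j 1) with hB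
  have hcol : (fun k => B k j) = Pi.single i 1 + (fun k => if k = i then 0 else M k j) := by
    funext k
    by_cases hk : k = i
    · subst hk; simp [hB, Matrix.updateRow_self, Pi.single_eq_same]
    · simp [hB, Matrix.updateRow_ne hk, Pi.single_eq_of_ne hk, hk]
  calc (B.updateCol j (Pi.single i 1)).det
      = (B.updateCol j (Pi.single i 1)).det
        + (B.updateCol j (fun k => if k = i then 0 else M k j)).det := by
        rw [Matrix.det_eq_zero_of_row_eq_zero i (A := B.updateCol j (fun k => if k = i then 0 else M k j)) ?_, add_zero]
        intro l
        by_cases hl : l = j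
        · subst hl; simp [Matrix.updateCol_self]
        · simp [Matrix.updateCol_ne hl, hB, Matrix.updateRow_self, Pi.single_eq_of_ne hl]
    _ = (B.updateCol j (fun k => B k j)).det := by
        rw [← Matrix.det_updateCol_add, ← hcol]
    _ = B.det := by rw [Matrix.updateCol_eq_self]

lemma updateRC_comm (M : Matrix (Fin n) (Fin n) ℝ) (i j : Fin n) :
    (M.updateRow i (Pi.single j 1)).updateCol j (Pi.single i 1)
      = (M.updateCol j (Pi.single i 1)).updateRow i (Pi.single j 1) := by
  ext v w
  by_cases hv : v = i <;> by_cases hw : w = j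
  · subst hv; subst hw
    simp [Matrix.updateCol_self, Matrix.updateRow_self, Pi.single_eq_same]
  · subst hv
    simp [Matrix.updateCol_ne hw, Matrix.updateRow_self]
  · subst hw
    simp [Matrix.updateCol_self, Matrix.updateRow_ne hv]
  · simp [Matrix.updateCol_ne hw, Matrix.updateRow_ne hv]

lemma det_border' (M : Matrix (Fin n) (Fin n) ℝ) (i j : Fin n) :
    ((M.updateCol j (Pi.single i 1)).updateRow i (Pi.single j 1)).det
      = (M.updateCol j (Pi.single i 1)).det := by
  have h := det_border Mᵀ j i
  rw [Matrix.updateRow_transpose, Matrix.updateCol_transpose, Matrix.det_transpose,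
    Matrix.det_transpose] at h
  exact h

/-- Diagonal cofactor equality for matrices with zero row and column sums. -/
lemma cofactor_eq (hn : 0 < n) (M : Matrix (Fin n) (Fin n) ℝ)
    (hrow : ∀ v, ∑ w, M v w = 0) (hcol : ∀ w, ∑ v, M v w = 0) (i j : Fin n) :
    ((M.updateRow i (Pi.single i 1)).updateCol i (Pi.single i 1)).det
      = ((M.updateRow j (Pi.single j 1)).updateCol j (Pi.single j 1)).det := by
  calc ((M.updateRow i (Pi.single i 1)).updateCol i (Pi.single i 1)).det
      = (M.updateRow i (Pi.single i 1)).det := det_border M i i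
    _ = (M.updateRow i (Pi.single j 1)).det := det_updateRow_single M hn hrow i i j
    _ = ((M.updateRow i (Pi.single j 1)).updateCol j (Pi.single i 1)).det := (det_border M i j).symm
    _ = ((M.updateCol j (Pi.single i 1)).updateRow i (Pi.single j 1)).det := by rw [updateRC_comm]
    _ = (M.updateCol j (Pi.single i 1)).det := det_border' M i j
    _ = (M.updateCol j (Pi.single j 1)).det := det_updateCol_single M hn hcol j i j
    _ = ((M.updateCol j (Pi.single j 1)).updateRow j (Pi.single j 1)).det := (det_border' M j j).symm
    _ = ((M.updateRow j (Pi.single j 1)).updateCol j (Pi.single j 1)).det := by rw [← updateRC_comm]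

/-- The (weighted, directed) Laplacian of `y`. -/
noncomputable def Lap (n : ℕ) (y : Fin n × Fin n → ℝ) : Matrix (Fin n) (Fin n) ℝ :=
  fun v w => if v = w then ∑ u ∈ Finset.univ.filter (fun u => u ≠ v), y (v, u) else - y (v, w)

/-- The Laplacian with row and column `r` replaced by the `r`-th standard basis vector. -/
noncomputable def ArM (n : ℕ) (y : Fin n × Fin n → ℝ) (r : Fin n) : Matrix (Fin n) (Fin n) ℝ :=
  ((Lap n y).updateRow r (Pi.single r 1)).updateCol r (Pi.single r 1)

/-- The permutations compatible with a function `g`. -/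
noncomputable def Kset (n : ℕ) (g : Fin n → Fin n) : Finset (Equiv.Perm (Fin n)) :=
  Finset.univ.filter (fun σ => ∀ v, σ v = v ∨ σ v = g v)

/-- The signed weight of a permutation. -/
noncomputable def Esgn (n : ℕ) (σ : Equiv.Perm (Fin n)) : ℝ :=
  ((Equiv.Perm.sign σ : ℤ) : ℝ) * ∏ v, (if σ v = v then (1:ℝ) else -1)

/-- Functions fixing `r` and without other fixed points. -/
noncomputable def Gset (n : ℕ) (r : Fin n) : Finset (Fin n → Fin n) :=
  Finset.univ.filter (fun g => g r = r ∧ ∀ v, v ≠ r → g v ≠ v)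

/-- All iteration orbits end at `r`. -/
def Acyc (n : ℕ) (r : Fin n) (g : Fin n → Fin n) : Prop :=
  ∀ v, ∃ k, g^[k] v = r

lemma lap_row_sum (y : Fin n × Fin n → ℝ) (v : Fin n) : ∑ w, Lap n y v w = 0 := by
  rw [← Finset.add_sum_erase Finset.univ _ (Finset.mem_univ v)]
  have h1 : Lap n y v v = ∑ u ∈ Finset.univ.erase v, y (v, u) := by
    simp [Lap, Finset.filter_ne']
  have h2 : ∑ w ∈ Finset.univ.erase v, Lap n y v w
      = -∑ w ∈ Finset.univ.erase v, y (v, w) := by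
    rw [← Finset.sum_neg_distrib]
    refine Finset.sum_congr rfl fun w hw => ?_
    have hvw : v ≠ w := fun h => (Finset.mem_erase.mp hw).1 h.symm
    simp [Lap, hvw]
  rw [h1, h2]
  ring

lemma lap_col_sum (y : Fin n × Fin n → ℝ) (hy : memCircBar n y) (w : Fin n) :
    ∑ v, Lap n y v w = 0 := by
  have hyw := hy w
  simp only [Finset.filter_ne'] at hyw
  rw [← Finset.add_sum_erase Finset.univ _ (Finset.mem_univ w)]
  have h1 : Lap n y w w = ∑ u ∈ Finset.univ.erase w, y (w, u) := by
    simp [Lap, Finset.filter_ne']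
  have h2 : ∑ v ∈ Finset.univ.erase w, Lap n y v w
      = -∑ v ∈ Finset.univ.erase w, y (v, w) := by
    rw [← Finset.sum_neg_distrib]
    refine Finset.sum_congr rfl fun v hv => ?_
    have hvw : v ≠ w := (Finset.mem_erase.mp hv).1
    simp [Lap, hvw]
  rw [h1, h2]
  linarith [hyw]

lemma ArM_apply (y : Fin n × Fin n → ℝ) (r v w : Fin n) :
    ArM n y r v w
      = if w = r then (if v = r then (1:ℝ) else 0) else if v = r then 0 else Lap n y v w := by
  unfold ArM
  by_cases hw : w = r
  · subst hw
    rw [if_pos rfl]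
    simp [Matrix.updateCol_self, Pi.single_apply]
  · rw [if_neg hw, Matrix.updateCol_ne hw]
    by_cases hv : v = r
    · subst hv; rw [if_pos rfl, Matrix.updateRow_self, Pi.single_eq_of_ne hw]
    · rw [if_neg hv, Matrix.updateRow_ne hv]

lemma expand_det (y : Fin n × Fin n → ℝ) (r : Fin n) :
    (ArM n y r).det
      = ∑ g ∈ Gset n r, (∑ σ ∈ Kset n g, Esgn n σ) * ∏ v ∈ Finset.univ.erase r, y (v, g v) := by
  classical
  have h0 : (ArM n y r).det
      = ∑ σ : Equiv.Perm (Fin n), ((Equiv.Perm.sign σ : ℤ) : ℝ) * ∏ i, ArM n y r i (σ i) := by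
    rw [← Matrix.det_transpose (ArM n y r), Matrix.det_apply']
    rfl
  set Pfix := Finset.univ.filter (fun σ : Equiv.Perm (Fin n) => σ r = r) with hPfix
  have hvanish : ∀ σ ∈ (Finset.univ : Finset (Equiv.Perm (Fin n))),
      ((Equiv.Perm.sign σ : ℤ) : ℝ) * ∏ i, ArM n y r i (σ i) ≠ 0 → σ r = r := by
    intro σ _ hne
    by_contra hr
    apply hne
    have hz : ArM n y r r (σ r) = 0 := by
      rw [ArM_apply]
      simp [hr]
    rw [Finset.prod_eq_zero (Finset.mem_univ r) hz, mul_zero]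
  set Cse : Equiv.Perm (Fin n) → Fin n → Finset (Fin n) :=
    fun σ i => if i = r then {r} else if σ i = i then Finset.univ.erase i else {σ i} with hCse
  set Tf : Equiv.Perm (Fin n) → Fin n → Fin n → ℝ :=
    fun σ i u => if i = r then 1 else if σ i = i then y (i, u) else -y (i, u) with hTf
  have hfac : ∀ σ ∈ Pfix, ∀ i, ArM n y r i (σ i) = ∑ u ∈ Cse σ i, Tf σ i u := by
    intro σ hσ i
    have hσr : σ r = r := (Finset.mem_filter.mp hσ).2
    by_cases hi : i = r
    · subst hi
      rw [ArM_apply]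
      simp [hσr, hCse, hTf]
    · by_cases hfix : σ i = i
      · have hσir : σ i ≠ r := by rw [hfix]; exact hi
        rw [ArM_apply]
        simp [hi, hfix, hσir, hCse, hTf, Lap, Finset.filter_ne']
      · have hσir : σ i ≠ r := fun h => hi (σ.injective (h.trans hσr.symm))
        have hne : i ≠ σ i := fun h => hfix h.symm
        rw [ArM_apply]
        simp [hi, hfix, hσir, hne, hCse, hTf, Lap]
  have hprod : ∀ σ ∈ Pfix, ∀ g : Fin n → Fin n,
      (∏ i, Tf σ i (g i))
        = (∏ v, if σ v = v then (1:ℝ) else -1) * ∏ v ∈ Finset.univ.erase r, y (v, g v) := by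
    intro σ hσ g
    have hσr : σ r = r := (Finset.mem_filter.mp hσ).2
    have hpt : ∀ i, Tf σ i (g i)
        = (if σ i = i then (1:ℝ) else -1) * (if i = r then 1 else y (i, g i)) := by
      intro i
      by_cases hi : i = r
      · subst hi; simp [hσr, hTf]
      · by_cases hfix : σ i = i <;> simp [hi, hfix, hTf, neg_one_mul]
    rw [Finset.prod_congr rfl (fun i _ => hpt i), Finset.prod_mul_distrib]
    congr 1
    rw [← Finset.mul_prod_erase Finset.univ _ (Finset.mem_univ r)]
    rw [if_pos rfl, one_mul]
    exact Finset.prod_congr rfl fun v hv => if_neg (Finset.mem_erase.mp hv).1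
  have h2 : ∀ σ ∈ Pfix,
      ((Equiv.Perm.sign σ : ℤ) : ℝ) * ∏ i, ArM n y r i (σ i)
        = ∑ g ∈ Fintype.piFinset (Cse σ), Esgn n σ * ∏ v ∈ Finset.univ.erase r, y (v, g v) := by
    intro σ hσ
    rw [Finset.prod_congr rfl (fun i _ => hfac σ hσ i), Finset.prod_univ_sum, Finset.mul_sum]
    refine Finset.sum_congr rfl fun g _ => ?_
    rw [hprod σ hσ g, Esgn]
    ring
  have hiff : ∀ (σ : Equiv.Perm (Fin n)) (g : Fin n → Fin n),
      σ ∈ Pfix ∧ g ∈ Fintype.piFinset (Cse σ) ↔ σ ∈ Kset n g ∧ g ∈ Gset n r := by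
    intro σ g
    simp only [hPfix, Kset, Gset, Finset.mem_filter, Finset.mem_univ, true_and,
      Fintype.mem_piFinset]
    constructor
    · rintro ⟨hσr, hpi⟩
      have hgr : g r = r := by
        have := hpi r
        simp [hCse] at this
        exact this
      refine ⟨fun v => ?_, hgr, fun v hv => ?_⟩
      · by_cases hv : v = r
        · subst hv; exact Or.inl hσr
        · have := hpi v
          simp only [hCse, if_neg hv] at this
          by_cases hfix : σ v = v
          · exact Or.inl hfix
          · rw [if_neg hfix] at this
            exact Or.inr (Finset.mem_singleton.mp this).symm
      · have := hpi v
        simp only [hCse, if_neg hv] at this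
        by_cases hfix : σ v = v
        · rw [if_pos hfix] at this
          exact (Finset.mem_erase.mp this).1
        · rw [if_neg hfix] at this
          rw [Finset.mem_singleton.mp this]
          exact hfix
    · rintro ⟨hcomp, hgr, hgne⟩
      have hσr : σ r = r := by
        rcases hcomp r with h | h
        · exact h
        · rw [h, hgr]
      refine ⟨hσr, fun v => ?_⟩
      simp only [hCse]
      by_cases hv : v = r
      · subst hv
        rw [if_pos rfl]
        exact Finset.mem_singleton.mpr hgr
      · rw [if_neg hv]
        by_cases hfix : σ v = v
        · rw [if_pos hfix]
          exact Finset.mem_erase.mpr ⟨hgne v hv, Finset.mem_univ _⟩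
        · rw [if_neg hfix]
          rcases hcomp v with h | h
          · exact absurd h hfix
          · exact Finset.mem_singleton.mpr h.symm
  rw [h0, ← Finset.sum_filter_of_ne hvanish]
  rw [Finset.sum_congr rfl h2, Finset.sum_comm' hiff]
  exact Finset.sum_congr rfl fun g _ => by rw [← Finset.sum_mul]

lemma key_acyclic (r : Fin n) (g : Fin n → Fin n) (hg : g ∈ Gset n r) (ha : Acyc n r g) :
    Kset n g = {1} := by
  have hgr : g r = r := ((Finset.mem_filter.mp hg).2).1
  have hgne : ∀ v, v ≠ r → g v ≠ v := ((Finset.mem_filter.mp hg).2).2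
  ext σ
  simp only [Kset, Finset.mem_filter, Finset.mem_univ, true_and, Finset.mem_singleton]
  constructor
  · intro hσ
    have main : ∀ k v, g^[k] v = r → σ v = v := by
      intro k
      induction k with
      | zero =>
        intro v hv
        simp only [Function.iterate_zero_apply] at hv
        subst hv
        rcases hσ v with h | h
        · exact h
        · rw [h, hgr]
      | succ k ih =>
        intro v hv
        rcases hσ v with h | h
        · exact h
        · by_cases hvr : v = r
          · subst hvr; rw [h, hgr]
          · have hgv : σ (g v) = g v := ih (g v) (by rwa [Function.iterate_succ_apply] at hv)
            have hvgv : v = g v := σ.injective (by rw [h, hgv])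
            exact absurd hvgv.symm (hgne v hvr)
    refine Equiv.ext fun v => ?_
    obtain ⟨k, hk⟩ := ha v
    rw [main k v hk]
    rfl
  · rintro rfl
    intro v
    exact Or.inl rfl

lemma key_cyclic (r : Fin n) (g : Fin n → Fin n) (hg : g ∈ Gset n r) (ha : ¬ Acyc n r g) :
    ∑ σ ∈ Kset n g, Esgn n σ = 0 := by
  classical
  have hgr : g r = r := ((Finset.mem_filter.mp hg).2).1
  have hgne : ∀ v, v ≠ r → g v ≠ v := ((Finset.mem_filter.mp hg).2).2
  rw [Acyc] at ha
  push_neg at ha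
  obtain ⟨v₀, hv₀⟩ := ha
  obtain ⟨a, b, hlt, heq⟩ : ∃ a b : ℕ, a < b ∧ g^[a] v₀ = g^[b] v₀ := by
    obtain ⟨a, b, hab, heq⟩ := Finite.exists_ne_map_eq_of_infinite (fun k : ℕ => g^[k] v₀)
    rcases lt_or_gt_of_ne hab with h | h
    · exact ⟨a, b, h, heq⟩
    · exact ⟨b, a, h, heq.symm⟩
  set p := g^[a] v₀ with hp
  set m := b - a with hm
  have hm0 : 0 < m := Nat.sub_pos_of_lt hlt
  have hper : g^[m] p = p := by
    rw [hp, ← Function.iterate_add_apply, hm, Nat.sub_add_cancel hlt.le, ← heq]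
  have hpnr : ∀ i, g^[i] p ≠ r := by
    intro i
    rw [hp, ← Function.iterate_add_apply]
    exact hv₀ _
  set O : Finset (Fin n) := Finset.univ.filter (fun x => ∃ i, g^[i] p = x) with hO
  have hmemO : ∀ x, x ∈ O ↔ ∃ i, g^[i] p = x := by intro x; simp [hO]
  have hpO : p ∈ O := (hmemO p).mpr ⟨0, rfl⟩
  have hOr : ∀ x ∈ O, x ≠ r := by
    intro x hx
    obtain ⟨i, hi⟩ := (hmemO x).mp hx
    exact hi ▸ hpnr i
  have hOg : ∀ x ∈ O, g x ∈ O := by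
    intro x hx
    obtain ⟨i, hi⟩ := (hmemO x).mp hx
    exact (hmemO _).mpr ⟨i + 1, by rw [Function.iterate_succ_apply', hi]⟩
  have hOper : ∀ x ∈ O, g^[m] x = x := by
    intro x hx
    obtain ⟨i, hi⟩ := (hmemO x).mp hx
    rw [← hi, ← Function.iterate_add_apply, Nat.add_comm m i, Function.iterate_add_apply, hper]
  have hOne : ∀ x ∈ O, g x ≠ x := fun x hx => hgne x (hOr x hx)
  have hOinj : ∀ x ∈ O, ∀ z ∈ O, g x = g z → x = z := by
    intro x hx z hz hgxz
    have hx' : g^[m] x = x := hOper x hx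
    have hz' : g^[m] z = z := hOper z hz
    obtain ⟨m', hm'⟩ : ∃ m', m = m' + 1 := ⟨m - 1, (Nat.succ_pred_eq_of_pos hm0).symm⟩
    rw [hm', Function.iterate_succ_apply] at hx' hz'
    rw [← hx', hgxz, hz']
  have hOiter : ∀ i, ∀ x ∈ O, g^[i] x ∈ O := by
    intro i
    induction i with
    | zero => intro x hx; simpa using hx
    | succ i ih =>
      intro x hx
      rw [Function.iterate_succ_apply]
      exact ih _ (hOg x hx)
  have hmt : ∀ t, g^[m * t] p = p := by
    intro t
    induction t with
    | zero => simp
    | succ t ih => rw [Nat.mul_succ, Function.iterate_add_apply, hper, ih]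
  have hback : ∀ x ∈ O, ∃ j, g^[j] x = p := by
    intro x hx
    obtain ⟨i, hi⟩ := (hmemO x).mp hx
    refine ⟨m * i - i, ?_⟩
    rw [← hi, ← Function.iterate_add_apply, Nat.sub_add_cancel (Nat.le_mul_of_pos_left i hm0), hmt]
  have hOreach : ∀ x ∈ O, ∀ z ∈ O, ∃ j, g^[j] x = z := by
    intro x hx z hz
    obtain ⟨j₁, hj₁⟩ := hback x hx
    obtain ⟨i, hi⟩ := (hmemO z).mp hz
    exact ⟨i + j₁, by rw [Function.iterate_add_apply, hj₁, hi]⟩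
  set cf : Fin n → Fin n := fun x => if x ∈ O then g x else x with hcf
  have hcfinj : Function.Injective cf := by
    intro x z hxz
    by_cases hx : x ∈ O <;> by_cases hz' : z ∈ O
    · simp only [hcf, if_pos hx, if_pos hz'] at hxz
      exact hOinj x hx z hz' hxz
    · simp only [hcf, if_pos hx, if_neg hz'] at hxz
      exact absurd (hxz ▸ hOg x hx) hz'
    · simp only [hcf, if_neg hx, if_pos hz'] at hxz
      exact absurd (by rw [hxz]; exact hOg z hz') hx
    · simpa [hcf, if_neg hx, if_neg hz'] using hxz
  set c : Equiv.Perm (Fin n) := Equiv.ofBijective cf (Finite.injective_iff_bijective.mp hcfinj)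
    with hc
  have hcO : ∀ x ∈ O, c x = g x := by
    intro x hx
    show cf x = g x
    simp only [hcf, if_pos hx]
  have hcnO : ∀ x ∉ O, c x = x := by
    intro x hx
    show cf x = x
    simp only [hcf, if_neg hx]
  have hcinvnO : ∀ x ∉ O, c⁻¹ x = x := by
    intro x hx
    apply c.injective
    rw [← Equiv.Perm.mul_apply, mul_inv_cancel, Equiv.Perm.one_apply, hcnO x hx]
  have hcinvO : ∀ x ∈ O, c⁻¹ x ∈ O := by
    intro x hx
    by_contra hninO
    have h1 : c (c⁻¹ x) = c⁻¹ x := hcnO _ hninO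
    rw [← Equiv.Perm.mul_apply, mul_inv_cancel, Equiv.Perm.one_apply] at h1
    exact hninO (h1 ▸ hx)
  have hsupp : c.support = O := by
    ext x
    rw [Equiv.Perm.mem_support]
    constructor
    · intro hx
      by_contra hninO
      exact hx (hcnO x hninO)
    · intro hx
      rw [hcO x hx]
      exact hOne x hx
  have hpow : ∀ j : ℕ, (c ^ j) p = g^[j] p := by
    intro j
    induction j with
    | zero => simp
    | succ j ih =>
      rw [pow_succ', Equiv.Perm.mul_apply, ih, hcO _ (hOiter j p hpO)]
      exact (Function.iterate_succ_apply' g j p).symm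
  have hcyc : c.IsCycle := by
    refine ⟨p, ?_, ?_⟩
    · rw [hcO p hpO]
      exact hOne p hpO
    · intro x hx
      have hxO : x ∈ O := by
        by_contra hninO
        exact hx (hcnO x hninO)
      obtain ⟨j, hj⟩ := (hmemO x).mp hxO
      exact ⟨(j : ℤ), by rw [zpow_natCast, hpow, hj]⟩
  have hsgnc : ((Equiv.Perm.sign c : ℤ) : ℝ) = -(-1) ^ O.card := by
    rw [hcyc.sign, hsupp]
    push_cast
    ring
  have hneg : ((-1:ℝ)) ^ O.card * (-1) ^ O.card = 1 := by
    rw [← mul_pow]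
    norm_num
  have hmulE : ∀ σ : Equiv.Perm (Fin n), (∀ x ∈ O, σ x = x) → Esgn n (σ * c) = - Esgn n σ := by
    intro σ hfix
    have hprodeq : (∏ v, if (σ * c) v = v then (1:ℝ) else -1)
        = (∏ v, if σ v = v then (1:ℝ) else -1) * (-1) ^ O.card := by
      have hpt : ∀ v, (if (σ * c) v = v then (1:ℝ) else -1)
          = (if σ v = v then (1:ℝ) else -1) * (if v ∈ O then -1 else 1) := by
        intro v
        by_cases hv : v ∈ O
        · have h1 : (σ * c) v = g v := by
            rw [Equiv.Perm.mul_apply, hcO v hv]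
            exact hfix _ (hOg v hv)
          rw [if_pos (hfix v hv), if_neg (by rw [h1]; exact hOne v hv), if_pos hv]
          ring
        · have h1 : (σ * c) v = σ v := by rw [Equiv.Perm.mul_apply, hcnO v hv]
          rw [h1, if_neg hv, mul_one]
      rw [Finset.prod_congr rfl (fun v _ => hpt v), Finset.prod_mul_distrib]
      congr 1
      rw [Finset.prod_ite_mem Finset.univ O (fun _ => (-1:ℝ)), Finset.univ_inter,
        Finset.prod_const]
    have hsgnmul : ((Equiv.Perm.sign (σ * c) : ℤ) : ℝ)
        = ((Equiv.Perm.sign σ : ℤ) : ℝ) * ((Equiv.Perm.sign c : ℤ) : ℝ) := by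
      rw [Equiv.Perm.sign_mul]
      push_cast
      ring
    rw [Esgn, Esgn, hsgnmul, hprodeq, hsgnc]
    have hcalc : ((Equiv.Perm.sign σ : ℤ) : ℝ) * -(-1) ^ O.card
        * ((∏ v, if σ v = v then (1:ℝ) else -1) * (-1) ^ O.card)
        = -(((Equiv.Perm.sign σ : ℤ) : ℝ) * ∏ v, if σ v = v then (1:ℝ) else -1)
          * ((-1) ^ O.card * (-1) ^ O.card) := by ring
    rw [hcalc, hneg, mul_one]
  have hKmem : ∀ σ : Equiv.Perm (Fin n), σ ∈ Kset n g ↔ ∀ v, σ v = v ∨ σ v = g v := by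
    intro σ
    simp [Kset]
  have hdich : ∀ σ ∈ Kset n g, (∀ x ∈ O, σ x = x) ∨ (∀ x ∈ O, σ x = g x) := by
    intro σ hσ
    rw [hKmem] at hσ
    by_cases hfix : ∀ x ∈ O, σ x = x
    · exact Or.inl hfix
    · push_neg at hfix
      obtain ⟨x₀, hx₀O, hx₀⟩ := hfix
      have hgx₀ : σ x₀ = g x₀ := (hσ x₀).resolve_left hx₀
      right
      have claim : ∀ i, σ (g^[i] x₀) = g (g^[i] x₀) := by
        intro i
        induction i with
        | zero => simpa using hgx₀
        | succ i ih =>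
          rw [Function.iterate_succ_apply']
          have haO : g^[i] x₀ ∈ O := hOiter i x₀ hx₀O
          rcases hσ (g (g^[i] x₀)) with h | h
          · exfalso
            have heq2 : g^[i] x₀ = g (g^[i] x₀) := σ.injective (by rw [ih, h])
            exact hOne _ haO heq2.symm
          · exact h
      intro x hx
      obtain ⟨j, hj⟩ := hOreach x₀ hx₀O x hx
      rw [← hj]
      exact claim j
  have hKA : ∀ σ ∈ Kset n g, (∀ x ∈ O, σ x = x) → σ * c ∈ Kset n g := by
    intro σ hσ hfix
    rw [hKmem] at hσ ⊢
    intro v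
    by_cases hv : v ∈ O
    · right
      rw [Equiv.Perm.mul_apply, hcO v hv]
      exact hfix _ (hOg v hv)
    · rw [Equiv.Perm.mul_apply, hcnO v hv]
      exact hσ v
  have hKB : ∀ σ ∈ Kset n g, (∀ x ∈ O, σ x = g x) →
      (σ * c⁻¹ ∈ Kset n g ∧ ∀ x ∈ O, (σ * c⁻¹) x = x) := by
    intro σ hσ hgfix
    rw [hKmem] at hσ
    have hfixO : ∀ x ∈ O, (σ * c⁻¹) x = x := by
      intro x hx
      rw [Equiv.Perm.mul_apply]
      have h1 : c⁻¹ x ∈ O := hcinvO x hx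
      rw [hgfix _ h1]
      have h2 := hcO _ h1
      rw [← Equiv.Perm.mul_apply, mul_inv_cancel, Equiv.Perm.one_apply] at h2
      rw [← h2]
    refine ⟨?_, hfixO⟩
    rw [hKmem]
    intro v
    by_cases hv : v ∈ O
    · exact Or.inl (hfixO v hv)
    · rw [Equiv.Perm.mul_apply, hcinvnO v hv]
      exact hσ v
  refine Finset.sum_involution (fun σ _ => if σ p = p then σ * c else σ * c⁻¹) ?_ ?_ ?_ ?_
  · intro σ hσ
    rcases hdich σ hσ with hfix | hgfix
    · simp only [if_pos (hfix p hpO)]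
      rw [hmulE σ hfix]
      ring
    · have hσp : σ p ≠ p := by
        rw [hgfix p hpO]
        exact hOne p hpO
      simp only [if_neg hσp]
      obtain ⟨-, hfix'⟩ := hKB σ hσ hgfix
      have h3 : Esgn n ((σ * c⁻¹) * c) = - Esgn n (σ * c⁻¹) := hmulE _ hfix'
      rw [inv_mul_cancel_right] at h3
      rw [h3]
      ring
  · intro σ hσ _
    rcases hdich σ hσ with hfix | hgfix
    · simp only [if_pos (hfix p hpO)]
      intro hcon
      have h4 := congrArg (fun τ : Equiv.Perm (Fin n) => τ p) hcon
      simp only [Equiv.Perm.mul_apply] at h4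
      rw [hcO p hpO, hfix _ (hOg p hpO), hfix p hpO] at h4
      exact hOne p hpO h4
    · have hσp : σ p ≠ p := by
        rw [hgfix p hpO]
        exact hOne p hpO
      simp only [if_neg hσp]
      intro hcon
      have h4 := congrArg (fun τ : Equiv.Perm (Fin n) => τ p) hcon
      obtain ⟨-, hfix'⟩ := hKB σ hσ hgfix
      rw [hfix' p hpO] at h4
      exact hσp h4.symm
  · intro σ hσ
    rcases hdich σ hσ with hfix | hgfix
    · simp only [if_pos (hfix p hpO)]
      exact hKA σ hσ hfix
    · have hσp : σ p ≠ p := by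
        rw [hgfix p hpO]
        exact hOne p hpO
      simp only [if_neg hσp]
      exact (hKB σ hσ hgfix).1
  · intro σ hσ
    rcases hdich σ hσ with hfix | hgfix
    · have h1 : (σ * c) p ≠ p := by
        rw [Equiv.Perm.mul_apply, hcO p hpO, hfix _ (hOg p hpO)]
        exact hOne p hpO
      simp only [if_pos (hfix p hpO), if_neg h1]
      rw [mul_inv_cancel_right]
    · have hσp : σ p ≠ p := by
        rw [hgfix p hpO]
        exact hOne p hpO
      obtain ⟨-, hfix'⟩ := hKB σ hσ hgfix
      simp only [if_neg hσp, if_pos (hfix' p hpO)]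
      rw [inv_mul_cancel_right]

lemma key_sum (r : Fin n) (g : Fin n → Fin n) (hg : g ∈ Gset n r) :
    ∑ σ ∈ Kset n g, Esgn n σ = if Acyc n r g then 1 else 0 := by
  by_cases h : Acyc n r g
  · rw [if_pos h, key_acyclic r g hg h, Finset.sum_singleton]
    simp [Esgn]
  · rw [if_neg h]
    exact key_cyclic r g hg h

lemma reach_undir (D : Finset (Fin n × Fin n)) (hD : D ⊆ E0 n) (u w : Fin n)
    (h : Relation.ReflTransGen (fun a b => (a, b) ∈ D) u w) :
    (undirGraph n D).Reachable u w := by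
  induction h with
  | refl => exact SimpleGraph.Reachable.refl u
  | @tail b c _ hbc ih =>
    have hne : b ≠ c := by
      have := hD hbc
      simp only [E0, Finset.mem_filter, Finset.mem_univ, true_and] at this
      exact this
    exact ih.trans (SimpleGraph.Adj.reachable ⟨hne, Or.inl hbc⟩)

lemma arb_of_acyc (hn : 0 < n) (r : Fin n) (g : Fin n → Fin n) (hgr : g r = r)
    (hgne : ∀ v, v ≠ r → g v ≠ v) (hacyc : Acyc n r g) :
    IsArb n r ((Finset.univ.erase r).image (fun v => (v, g v))) := by
  classical
  set A := (Finset.univ.erase r).image (fun v => (v, g v)) with hA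
  have hsubE : A ⊆ E0 n := by
    intro e he
    obtain ⟨v, hv, rfl⟩ := Finset.mem_image.mp he
    have hvr : v ≠ r := (Finset.mem_erase.mp hv).1
    simp only [E0, Finset.mem_filter, Finset.mem_univ, true_and]
    exact Ne.symm (hgne v hvr)
  have hinj : Set.InjOn (fun v => (v, g v)) ↑(Finset.univ.erase r) :=
    fun a _ b _ h => congrArg Prod.fst h
  have hcard : A.card = n - 1 := by
    rw [hA, Finset.card_image_of_injOn hinj, Finset.card_erase_of_mem (Finset.mem_univ r),
      Finset.card_univ, Fintype.card_fin]
  have hreach : ∀ v, reachesIn n A v r := by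
    have key : ∀ k v, g^[k] v = r → reachesIn n A v r := by
      intro k
      induction k with
      | zero =>
        intro v hk
        simp only [Function.iterate_zero_apply] at hk
        exact hk ▸ Relation.ReflTransGen.refl
      | succ k ih =>
        intro v hk
        by_cases hvr : v = r
        · exact hvr ▸ Relation.ReflTransGen.refl
        · have hstep : (v, g v) ∈ A :=
            Finset.mem_image.mpr ⟨v, Finset.mem_erase.mpr ⟨hvr, Finset.mem_univ v⟩, rfl⟩
          exact Relation.ReflTransGen.head hstep
            (ih (g v) (by rwa [Function.iterate_succ_apply] at hk))
    intro v
    obtain ⟨k, hk⟩ := hacyc v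
    exact key k v hk
  have hconn : (undirGraph n A).Connected := by
    have hR : ∀ v, (undirGraph n A).Reachable v r := by
      intro v
      exact reach_undir A hsubE v r (hreach v)
    haveI : Nonempty (Fin n) := ⟨⟨0, hn⟩⟩
    exact SimpleGraph.Connected.mk (fun u v => (hR u).trans (hR v).symm)
  exact ⟨⟨hsubE, hcard, hconn⟩, hreach⟩

lemma bij_arb (hn : 0 < n) (y : Fin n × Fin n → ℝ) (r : Fin n) :
    ∑ g ∈ (Gset n r).filter (Acyc n r), ∏ v ∈ Finset.univ.erase r, y (v, g v)
      = SArb n r y := by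
  classical
  rw [SArb]
  refine Finset.sum_bij (fun g _ => (Finset.univ.erase r).image (fun v => (v, g v)))
    ?_ ?_ ?_ ?_
  · -- maps into arborescences
    intro g hg
    obtain ⟨hgG, hacyc⟩ := Finset.mem_filter.mp hg
    have hgr : g r = r := ((Finset.mem_filter.mp hgG).2).1
    have hgne : ∀ v, v ≠ r → g v ≠ v := ((Finset.mem_filter.mp hgG).2).2
    exact Finset.mem_filter.mpr ⟨Finset.mem_univ _, arb_of_acyc hn r g hgr hgne hacyc⟩
  · -- injective
    intro g₁ h₁ g₂ h₂ heq
    have hg₁r : g₁ r = r := ((Finset.mem_filter.mp (Finset.mem_filter.mp h₁).1).2).1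
    have hg₂r : g₂ r = r := ((Finset.mem_filter.mp (Finset.mem_filter.mp h₂).1).2).1
    funext v
    by_cases hv : v = r
    · rw [hv, hg₁r, hg₂r]
    · have heq' : (Finset.univ.erase r).image (fun v => (v, g₁ v))
          = (Finset.univ.erase r).image (fun v => (v, g₂ v)) := heq
      have hmem : (v, g₁ v) ∈ (Finset.univ.erase r).image (fun v => (v, g₂ v)) := by
        rw [← heq']
        exact Finset.mem_image.mpr ⟨v, Finset.mem_erase.mpr ⟨hv, Finset.mem_univ v⟩, rfl⟩
      obtain ⟨u, _, hpair⟩ := Finset.mem_image.mp hmem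
      have h1 : u = v := congrArg Prod.fst hpair
      have h2 := congrArg Prod.snd hpair
      rw [h1] at h2
      exact h2.symm
  · -- surjective
    intro A hA
    have hArb : IsArb n r A := (Finset.mem_filter.mp hA).2
    obtain ⟨⟨hsub, hcard, _⟩, hreach⟩ := hArb
    have hn2 : 0 < n := hn
    have hfib : A.card = ∑ v, (A.filter (fun e => e.1 = v)).card :=
      Finset.card_eq_sum_card_fiberwise (fun e _ => Finset.mem_univ e.1)
    have hex : ∀ v, v ≠ r → ∃ w, (v, w) ∈ A := by
      intro v hv
      rcases Relation.ReflTransGen.cases_head (hreach v) with h | ⟨w, hw, -⟩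
      · exact absurd h hv
      · exact ⟨w, hw⟩
    have hd1 : ∀ v, v ≠ r → 1 ≤ (A.filter (fun e => e.1 = v)).card := by
      intro v hv
      obtain ⟨w, hw⟩ := hex v hv
      exact Finset.card_pos.mpr ⟨(v, w), Finset.mem_filter.mpr ⟨hw, rfl⟩⟩
    have hsum : (A.filter (fun e => e.1 = r)).card
        + ∑ v ∈ Finset.univ.erase r, (A.filter (fun e => e.1 = v)).card = n - 1 := by
      rw [Finset.add_sum_erase Finset.univ (fun v => (A.filter (fun e => e.1 = v)).card)
        (Finset.mem_univ r), ← hfib, hcard]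
    have hcount : (n - 1) ≤ ∑ v ∈ Finset.univ.erase r, (A.filter (fun e => e.1 = v)).card := by
      have h1 : ∑ v ∈ Finset.univ.erase r, 1
          ≤ ∑ v ∈ Finset.univ.erase r, (A.filter (fun e => e.1 = v)).card :=
        Finset.sum_le_sum (fun v hv => hd1 v (Finset.mem_erase.mp hv).1)
      calc n - 1 = ∑ _v ∈ Finset.univ.erase r, 1 := by
            rw [Finset.sum_const, smul_eq_mul, mul_one,
              Finset.card_erase_of_mem (Finset.mem_univ r), Finset.card_univ, Fintype.card_fin]
        _ ≤ _ := h1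
    have hdr0 : (A.filter (fun e => e.1 = r)).card = 0 := by omega
    have hone : ∀ v, v ≠ r → (A.filter (fun e => e.1 = v)).card = 1 := by
      intro v hv
      by_contra hne1
      have h2 : 2 ≤ (A.filter (fun e => e.1 = v)).card := by
        have := hd1 v hv
        omega
      have hvmem : v ∈ Finset.univ.erase r := Finset.mem_erase.mpr ⟨hv, Finset.mem_univ v⟩
      have hsplit : ∑ u ∈ Finset.univ.erase r, (A.filter (fun e => e.1 = u)).card
          = (A.filter (fun e => e.1 = v)).card
            + ∑ u ∈ (Finset.univ.erase r).erase v, (A.filter (fun e => e.1 = u)).card :=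
        (Finset.add_sum_erase (Finset.univ.erase r)
          (fun u => (A.filter (fun e => e.1 = u)).card) hvmem).symm
      have hge : ((Finset.univ.erase r).erase v).card
          ≤ ∑ u ∈ (Finset.univ.erase r).erase v, (A.filter (fun e => e.1 = u)).card := by
        have h3 : ∑ _u ∈ (Finset.univ.erase r).erase v, 1
            ≤ ∑ u ∈ (Finset.univ.erase r).erase v, (A.filter (fun e => e.1 = u)).card :=
          Finset.sum_le_sum (fun u hu =>
            hd1 u (Finset.mem_erase.mp (Finset.mem_erase.mp hu).2).1)
        simpa using h3
      have hcards : ((Finset.univ.erase r).erase v).card = n - 2 := by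
        rw [Finset.card_erase_of_mem hvmem, Finset.card_erase_of_mem (Finset.mem_univ r),
          Finset.card_univ, Fintype.card_fin]
        omega
      have hnge2 : 1 < n := by
        rw [← Fintype.card_fin n]
        exact Fintype.one_lt_card_iff.mpr ⟨v, r, hv⟩
      omega
    have huniq : ∀ v, v ≠ r → ∀ w w', (v, w) ∈ A → (v, w') ∈ A → w = w' := by
      intro v hv w w' hw hw'
      by_contra hne
      have h2 : 1 < (A.filter (fun e => e.1 = v)).card :=
        Finset.one_lt_card.mpr ⟨(v, w), Finset.mem_filter.mpr ⟨hw, rfl⟩,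
          (v, w'), Finset.mem_filter.mpr ⟨hw', rfl⟩, by simp [hne]⟩
      rw [hone v hv] at h2
      exact absurd h2 (lt_irrefl 1)
    set g : Fin n → Fin n := fun v => if hv : v = r then r else (hex v hv).choose with hgdef
    have hgspec : ∀ v (hv : v ≠ r), (v, g v) ∈ A := by
      intro v hv
      simp only [hgdef, dif_neg hv]
      exact (hex v hv).choose_spec
    have hgr : g r = r := by simp [hgdef]
    have hgne : ∀ v, v ≠ r → g v ≠ v := by
      intro v hv
      have hmem := hsub (hgspec v hv)
      simp only [E0, Finset.mem_filter, Finset.mem_univ, true_and] at hmem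
      exact Ne.symm hmem
    have hacyc : Acyc n r g := by
      intro v
      have h : Relation.ReflTransGen (fun a b => (a, b) ∈ A) v r := hreach v
      induction h using Relation.ReflTransGen.head_induction_on with
      | refl => exact ⟨0, rfl⟩
      | @head a c h' _ ih =>
        obtain ⟨k, hk⟩ := ih
        have har : a ≠ r := by
          intro hh
          subst hh
          have hpos : 0 < (A.filter (fun e => e.1 = a)).card :=
            Finset.card_pos.mpr ⟨(a, c), Finset.mem_filter.mpr ⟨h', rfl⟩⟩
          omega
        have hc : c = g a := huniq a har c (g a) h' (hgspec a har)
        exact ⟨k + 1, by rw [Function.iterate_succ_apply, ← hc, hk]⟩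
    refine ⟨g, ?_, ?_⟩
    · refine Finset.mem_filter.mpr ⟨Finset.mem_filter.mpr ⟨Finset.mem_univ g, hgr, hgne⟩, hacyc⟩
    · apply Finset.eq_of_subset_of_card_le
      · intro e he
        obtain ⟨v, hv, rfl⟩ := Finset.mem_image.mp he
        exact hgspec v (Finset.mem_erase.mp hv).1
      · rw [Finset.card_image_of_injOn (fun a _ b _ h => congrArg Prod.fst h), hcard,
          Finset.card_erase_of_mem (Finset.mem_univ r), Finset.card_univ, Fintype.card_fin]
  · -- values agree
    intro g hg
    rw [Finset.prod_image (fun a _ b _ h => congrArg Prod.fst h)]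

lemma det_ArM (hn : 0 < n) (y : Fin n × Fin n → ℝ) (r : Fin n) :
    (ArM n y r).det = SArb n r y := by
  rw [expand_det, ← bij_arb hn y r, Finset.sum_filter]
  refine Finset.sum_congr rfl fun g hg => ?_
  rw [key_sum r g hg]
  by_cases h : Acyc n r g <;> simp [h]

end Aux

/-- `SArb` is root-independent on the circulation hyperplane. -/
theorem sarb_root_independent (n : ℕ) (hn : 2 ≤ n)
    (y : Fin n × Fin n → ℝ) (hy : memCircBar n y) (i j : Fin n) :
    SArb n i y = SArb n j y := by
  have h0 : 0 < n := lt_of_lt_of_le two_pos hn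
  calc SArb n i y = (ArM n y i).det := (det_ArM h0 y i).symm
    _ = (ArM n y j).det :=
        cofactor_eq h0 (Lap n y) (lap_row_sum y) (lap_col_sum y hy) i j
    _ = SArb n j y := det_ArM h0 y j
end
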